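/- arXiv:1602.03394 — 5 statements merged into one kernel-verified Lean document; each statement's English description precedes it below -/
import Mathlib

section
/- Let G be a finite metric graph and let λ > 0. Suppose some connected component of the subgraph G_λ contains two cycles with distinct edge sets, each of whose lengths is an odd integer multiple of π/√λ. Then λ is a resonance of G, i.e., R(G, λ) ≠ {0}. -/
open Real Set Filter Topology

noncomputable section

/-- A finite metric graph: finite vertex and edge sets, each edge `e` has an initial
vertex `o e`, a terminal vertex `t e` and a positive length `L e`, and is identified
with the interval `[0, L e]`.  Every vertex is an endpoint of some edge. -/
structure MetricGraph where
  V : Type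
  E : Type
  [fintV : Fintype V]
  [fintE : Fintype E]
  [decV : DecidableEq V]
  [decE : DecidableEq E]
  o : E → V
  t : E → V
  L : E → ℝ
  L_pos : ∀ e, 0 < L e
  noIsolated : ∀ v, ∃ e, o e = v ∨ t e = v

attribute [instance] MetricGraph.fintV MetricGraph.fintE MetricGraph.decV MetricGraph.decE

namespace MetricGraph

variable (G : MetricGraph)

/-- The source vertex of edge `e` traversed in direction `d`. -/
def esrc (e : G.E) (d : Bool) : G.V := if d then G.o e else G.t e

/-- The destination vertex of edge `e` traversed in direction `d`. -/
def edst (e : G.E) (d : Bool) : G.V := if d then G.t e else G.o e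

/-- A cycle in a metric graph: a closed walk which uses no edge twice and repeats no
vertex except that its initial and terminal vertices coincide. -/
structure Cycle where
  n : ℕ
  npos : 0 < n
  edge : Fin n → G.E
  dir : Fin n → Bool
  edge_inj : Function.Injective edge
  vert_inj : Function.Injective fun i => G.esrc (edge i) (dir i)
  chain : ∀ i : Fin n,
    G.edst (edge i) (dir i) =
      G.esrc (edge ⟨((i : ℕ) + 1) % n, Nat.mod_lt _ npos⟩)
        (dir ⟨((i : ℕ) + 1) % n, Nat.mod_lt _ npos⟩)

/-- The length of a cycle: the sum of the lengths of its edges. -/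
def Cycle.length {G : MetricGraph} (c : G.Cycle) : ℝ := ∑ i, G.L (c.edge i)

/-- The cycle `c` lies in the subgraph given by the edge set `S`. -/
def Cycle.inSub {G : MetricGraph} (c : G.Cycle) (S : Set G.E) : Prop := ∀ i, c.edge i ∈ S

/-- The cycle `c` has odd length with respect to `x`: its length is an odd multiple of `x`. -/
def Cycle.oddLength {G : MetricGraph} (c : G.Cycle) (x : ℝ) : Prop :=
  ∃ m : ℕ, Odd m ∧ c.length = m * x

/-- The initial vertex of a cycle. -/
def Cycle.start {G : MetricGraph} (c : G.Cycle) : G.V :=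
  G.esrc (c.edge ⟨0, c.npos⟩) (c.dir ⟨0, c.npos⟩)

/-- The vertices incident to an edge of the edge set `S`, i.e. the vertex set of the
subgraph generated by `S`. -/
def incVerts (S : Set G.E) : Set G.V := {v | ∃ e ∈ S, G.o e = v ∨ G.t e = v}

/-- Two vertices are related iff they are connected through edges of `S`. -/
def connRel (S : Set G.E) : G.V → G.V → Prop :=
  Relation.EqvGen fun v w => ∃ e ∈ S, G.o e = v ∧ G.t e = w

/-- The connected component of the vertex `v` in the subgraph given by `S`. -/
def component (S : Set G.E) (v : G.V) : Set G.V := {w | G.connRel S v w}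

/-- The number of connected components of the subgraph given by the edge set `S`. -/
def beta0 (S : Set G.E) : ℕ := (G.component S '' G.incVerts S).ncard

/-- The first Betti number `|E| - |V| + β₀` of the subgraph given by the edge set `S`. -/
def beta1 (S : Set G.E) : ℤ :=
  (S.ncard : ℤ) - ((G.incVerts S).ncard : ℤ) + (G.beta0 S : ℤ)

/-- The number of connected components of the subgraph given by `S` which contain a
cycle of odd length with respect to `x`. -/
def beta0odd (S : Set G.E) (x : ℝ) : ℕ :=
  (G.component S '' {v | v ∈ G.incVerts S ∧
    ∃ c : G.Cycle, c.inSub S ∧ c.oddLength x ∧ G.connRel S v c.start}).ncard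

/-- The edge set of the subgraph `G_λ`: all edges whose length is a positive integer
multiple of `π / √λ`. -/
def lamEdges (lam : ℝ) : Set G.E :=
  {e | ∃ k : ℕ, 0 < k ∧ G.L e = k * (π / Real.sqrt lam)}

/-- An edgewise given function is continuous at all the vertices of `G`. -/
def ContVert (f : G.E → ℝ → ℂ) : Prop :=
  (∀ e₁ e₂, G.o e₁ = G.o e₂ → f e₁ 0 = f e₂ 0) ∧
  (∀ e₁ e₂, G.o e₁ = G.t e₂ → f e₁ 0 = f e₂ (G.L e₂)) ∧
  (∀ e₁ e₂, G.t e₁ = G.t e₂ → f e₁ (G.L e₁) = f e₂ (G.L e₂))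

/-- The value of an (edgewise given, vertex-continuous) function at the vertex `v`. -/
def vtxVal (f : G.E → ℝ → ℂ) (v : G.V) : ℂ :=
  if h : ∃ e, G.o e = v then f h.choose 0
  else f (G.noIsolated v).choose (G.L ((G.noIsolated v).choose))

/-- `∂_ν f (v)`: the sum of the derivatives at the vertex `v` of the restrictions of
`f` to the edges incident to `v`, all pointing towards `v`. -/
def normDer (f : G.E → ℝ → ℂ) (v : G.V) : ℂ :=
  (∑ e ∈ Finset.univ.filter fun e => G.t e = v, deriv (f e) (G.L e)) -
    ∑ e ∈ Finset.univ.filter fun e => G.o e = v, deriv (f e) 0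

/-- `f` solves `-f'' = μ f` on every edge and is continuous at the vertices.
(A solution of `-f'' = μ f` on `[0, L e]` is identified with its unique extension to a
global solution on `ℝ`.) -/
def IsSol (mu : ℂ) (f : G.E → ℝ → ℂ) : Prop :=
  (∀ e, ContDiff ℝ 2 (f e)) ∧
  (∀ e, ∀ x : ℝ, deriv (deriv (f e)) x = -mu * f e x) ∧ G.ContVert f

/-- Membership in `ker (-Δ_G - λ)` for the Kirchhoff Laplacian `-Δ_G`. -/
def InKer (lam : ℝ) (f : G.E → ℝ → ℂ) : Prop :=
  G.IsSol (lam : ℂ) f ∧ ∀ v, G.normDer f v = 0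

/-- `ker (-Δ_G - λ)` as a set of (edgewise given) functions. -/
def kerSet (lam : ℝ) : Set (G.E → ℝ → ℂ) := {f | G.InKer lam f}

/-- `λ` is an eigenvalue of the Kirchhoff Laplacian `-Δ_G`. -/
def IsEigenvalue (lam : ℝ) : Prop := G.kerSet lam ≠ {0}

/-- `dim ker (-Δ_G - λ)`. -/
def dimKer (lam : ℝ) : ℕ := Module.finrank ℂ (Submodule.span ℂ (G.kerSet lam))

/-- The resonance eigenspace `R (G, λ)`: all elements of `ker (-Δ_G - λ)` vanishing at
every vertex of `G`. -/
def resSet (lam : ℝ) : Set (G.E → ℝ → ℂ) :=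
  {f | G.InKer lam f ∧ ∀ e, f e 0 = 0 ∧ f e (G.L e) = 0}

/-- `λ` is a (real) resonance of `G` iff `R (G, λ) ≠ {0}`. -/
def IsResonance (lam : ℝ) : Prop := G.resSet lam ≠ {0}

/-- `dim R (G, λ)`. -/
def dimRes (lam : ℝ) : ℕ := Module.finrank ℂ (Submodule.span ℂ (G.resSet lam))

/-- `R_B (G, λ)`: all elements of `ker (-Δ_G - λ)` vanishing at every vertex in `B`. -/
def resSetB (B : Set G.V) (lam : ℝ) : Set (G.E → ℝ → ℂ) :=
  {f | G.InKer lam f ∧ ∀ e, (G.o e ∈ B → f e 0 = 0) ∧ (G.t e ∈ B → f e (G.L e) = 0)}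

/-- `dim R_B (G, λ)`. -/
def dimResB (B : Set G.V) (lam : ℝ) : ℕ :=
  Module.finrank ℂ (Submodule.span ℂ (G.resSetB B lam))

/-- The degree of a vertex (a loop counts twice). -/
def degree (v : G.V) : ℕ := {e | G.o e = v}.ncard + {e | G.t e = v}.ncard

/-- The degree of a vertex inside the subgraph given by the edge set `S`. -/
def degreeIn (S : Set G.E) (v : G.V) : ℕ :=
  {e | e ∈ S ∧ G.o e = v}.ncard + {e | e ∈ S ∧ G.t e = v}.ncard

/-- The edge set of the core of `G`: the largest subgraph without vertices of degree one. -/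
def coreEdges : Set G.E := ⋃₀ {S : Set G.E | ∀ v, G.degreeIn S v ≠ 1}

/-- A boundary vertex is a vertex of degree one. -/
def IsBoundaryVertex (v : G.V) : Prop := G.degree v = 1

/-- A proper core vertex: all edges attached to it belong to the core of `G`. -/
def IsProperCoreVertex (v : G.V) : Prop :=
  ∀ e, G.o e = v ∨ G.t e = v → e ∈ G.coreEdges

/-- The defining property of the function `f^{(l)}` for the Titchmarsh--Weyl matrix:
`f` solves `-f'' = μ f` edgewise, is continuous at the vertices, and satisfies
`∂_ν f (v₀) = 1` and `∂_ν f (v) = 0` for all vertices `v ≠ v₀`. -/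
def IsTWsol (mu : ℂ) (v0 : G.V) (f : G.E → ℝ → ℂ) : Prop :=
  G.IsSol mu f ∧ G.normDer f v0 = 1 ∧ ∀ v, v ≠ v0 → G.normDer f v = 0

open scoped Classical in
/-- The Titchmarsh--Weyl matrix `M_B (μ)` with entries `(M_B (μ))_{k,l} = f^{(l)} (v_k)`
(defined via choice; junk if no `f^{(l)}` exists, i.e. at the eigenvalues). -/
def TW (B : Finset G.V) (mu : ℂ) : Matrix B B ℂ :=
  Matrix.of fun k l : B => if h : ∃ f, G.IsTWsol mu l f then G.vtxVal h.choose k else 0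

/-- The cycle `c` has commensurate edges: all ratios of edge lengths are rational. -/
def Commensurate (c : G.Cycle) : Prop :=
  ∀ i j, ∃ q : ℚ, G.L (c.edge i) = q * G.L (c.edge j)

/-- `u_C`: the maximal number such that the length of each edge of the cycle `c` is a
positive integer multiple of it. -/
def uC (c : G.Cycle) : ℝ :=
  sSup {u : ℝ | 0 < u ∧ ∀ i, ∃ k : ℕ, 0 < k ∧ G.L (c.edge i) = k * u}

/-- `λ_G := inf { π²/u_C² : C a cycle in G with commensurate edges }`, with value `+∞`
if there is no cycle with commensurate edges. -/
def lamThreshold : EReal :=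
  sInf {x : EReal | ∃ c : G.Cycle, G.Commensurate c ∧ x = ((π ^ 2 / (G.uC c) ^ 2 : ℝ) : EReal)}

end MetricGraph

section MatrixFun

variable {m : Type} [Fintype m]

/-- The matrix function `M` has a pole of order `n` at `λ`:
`lim_{z → λ} (z - λ)^n M(z)` exists and is nonzero, while
`lim_{z → λ} (z - λ)^(n+1) M(z) = 0`. -/
def hasPoleOrder (M : ℂ → Matrix m m ℂ) (lam : ℂ) (n : ℕ) : Prop :=
  (∃ A : Matrix m m ℂ, A ≠ 0 ∧
    Filter.Tendsto (fun z => (z - lam) ^ n • M z) (𝓝[≠] lam) (𝓝 A)) ∧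
  Filter.Tendsto (fun z => (z - lam) ^ (n + 1) • M z) (𝓝[≠] lam) (𝓝 0)

/-- `λ` is a pole of the matrix function `M`: `M` is analytic on a punctured
neighborhood of `λ` and has a pole of some order `n ≥ 1` at `λ`. -/
def isPole (M : ℂ → Matrix m m ℂ) (lam : ℂ) : Prop :=
  (∀ᶠ z in 𝓝[≠] lam, ∀ k l, AnalyticAt ℂ (fun w => M w k l) z) ∧
  ∃ n : ℕ, 1 ≤ n ∧ hasPoleOrder M lam n

open scoped Classical in
/-- `Res_λ M := (2πi)⁻¹ ∮_Γ M(μ) dμ`, computed entrywise over a sufficiently small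
positively oriented circle `Γ` centered at `λ` (defined via choice as the common value
of the circle integrals over all sufficiently small radii). -/
def matResidue (M : ℂ → Matrix m m ℂ) (lam : ℂ) : Matrix m m ℂ :=
  Matrix.of fun k l =>
    if h : ∃ c : ℂ, ∀ᶠ R in 𝓝[>] (0 : ℝ),
        (2 * (π : ℂ) * Complex.I)⁻¹ * circleIntegral (fun z => M z k l) lam R = c
    then h.choose else 0

end MatrixFun

/-! ### Auxiliary development for Statement 7 -/

namespace MetricGraph

variable (G : MetricGraph)

/-- The chosen multiplicity `k` with `L e = k · π/√λ` for `e ∈ G_λ` (0 otherwise). -/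
def kappa (lam : ℝ) (e : G.E) : ℕ :=
  open Classical in if h : e ∈ G.lamEdges lam then h.choose else 0

lemma kappa_spec {lam : ℝ} {e : G.E} (h : e ∈ G.lamEdges lam) :
    0 < G.kappa lam e ∧ G.L e = G.kappa lam e * (π / Real.sqrt lam) := by
  unfold kappa
  rw [dif_pos h]
  exact h.choose_spec

/-- The sign `(-1)^{k_e}`. -/
def epsZ (lam : ℝ) (e : G.E) : ℤ := (-1) ^ (G.kappa lam e)

lemma epsZ_eq_or (lam : ℝ) (e : G.E) : G.epsZ lam e = 1 ∨ G.epsZ lam e = -1 := by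
  rcases Nat.even_or_odd (G.kappa lam e) with h | h
  · exact Or.inl h.neg_one_pow
  · exact Or.inr h.neg_one_pow

lemma epsZ_odd (lam : ℝ) (e : G.E) : Odd (G.epsZ lam e) := by
  rcases G.epsZ_eq_or lam e with h | h <;> rw [h] <;> decide

/-- Validity of a walk (a list of directed edges) from `u` to `v` inside edge set `S`. -/
def WalkValid (S : Set G.E) : List (G.E × Bool) → G.V → G.V → Prop
  | [], u, v => u = v
  | s :: w, u, v => s.1 ∈ S ∧ G.esrc s.1 s.2 = u ∧ WalkValid S w (G.edst s.1 s.2) v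

/-- The coefficient vector associated to a walk. -/
def walkVec (lam : ℝ) : List (G.E × Bool) → G.E → ℤ
  | [] => fun _ => 0
  | s :: w => fun e =>
      (if e = s.1 then (if s.2 then 1 else -G.epsZ lam s.1) else 0) +
        G.epsZ lam s.1 * walkVec lam w e

/-- The product of the signs along a walk. -/
def walkE (lam : ℝ) (w : List (G.E × Bool)) : ℤ := (w.map fun s => G.epsZ lam s.1).prod

/-- The (integer) Kirchhoff defect of a coefficient vector at a vertex. -/
def defZ (lam : ℝ) (α : G.E → ℤ) (v : G.V) : ℤ :=
  (∑ e ∈ Finset.univ.filter fun e => G.t e = v, G.epsZ lam e * α e) -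
    ∑ e ∈ Finset.univ.filter fun e => G.o e = v, α e

lemma walkValid_append {S : Set G.E} :
    ∀ {w₁ w₂ : List (G.E × Bool)} {u v x : G.V},
      G.WalkValid S w₁ u v → G.WalkValid S w₂ v x → G.WalkValid S (w₁ ++ w₂) u x := by
  intro w₁
  induction w₁ with
  | nil => intro w₂ u v x h1 h2; cases h1; exact h2
  | cons s w ih =>
      intro w₂ u v x h1 h2
      obtain ⟨hS, hsrc, hw⟩ := h1
      exact ⟨hS, hsrc, ih hw h2⟩

lemma esrc_not (e : G.E) (d : Bool) : G.esrc e (!d) = G.edst e d := by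
  cases d <;> rfl

lemma edst_not (e : G.E) (d : Bool) : G.edst e (!d) = G.esrc e d := by
  cases d <;> rfl

lemma walkValid_reverse {S : Set G.E} :
    ∀ {w : List (G.E × Bool)} {u v : G.V}, G.WalkValid S w u v →
      G.WalkValid S (w.reverse.map fun s => (s.1, !s.2)) v u := by
  intro w
  induction w with
  | nil => intro u v h; exact h.symm
  | cons s w ih =>
      intro u v h
      obtain ⟨hS, hsrc, hw⟩ := h
      have h1 := ih hw
      have h2 : G.WalkValid S [(s.1, !s.2)] (G.edst s.1 s.2) u := by
        refine ⟨hS, ?_, ?_⟩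
        · exact G.esrc_not s.1 s.2
        · show G.edst s.1 (!s.2) = u
          rw [G.edst_not s.1 s.2]; exact hsrc
      have := G.walkValid_append h1 h2
      simpa [List.map_append] using this

lemma exists_walk {S : Set G.E} {u v : G.V} (h : G.connRel S u v) :
    ∃ w, G.WalkValid S w u v := by
  induction h with
  | rel a b hab =>
      obtain ⟨e, heS, ho, ht⟩ := hab
      refine ⟨[(e, true)], heS, ?_, ?_⟩
      · simpa [esrc] using ho
      · show G.edst e true = b
        simpa [edst] using ht
  | refl a => exact ⟨[], rfl⟩
  | symm a b _ ih =>
      obtain ⟨w, hw⟩ := ih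
      exact ⟨_, G.walkValid_reverse hw⟩
  | trans a b c _ _ ih1 ih2 =>
      obtain ⟨w1, hw1⟩ := ih1
      obtain ⟨w2, hw2⟩ := ih2
      exact ⟨_, G.walkValid_append hw1 hw2⟩

lemma defZ_single (lam : ℝ) (e0 : G.E) (c : ℤ) (v : G.V) :
    G.defZ lam (fun e => if e = e0 then c else 0) v =
      (if G.t e0 = v then G.epsZ lam e0 * c else 0) - (if G.o e0 = v then c else 0) := by
  unfold defZ
  simp only [mul_ite, mul_zero]
  rw [Finset.sum_ite_eq' _ e0 fun e => G.epsZ lam e * c,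
    Finset.sum_ite_eq' _ e0 fun _ => c]
  simp

lemma defZ_comb (lam : ℝ) (a b c : ℤ) (α β γ : G.E → ℤ) (v : G.V) :
    G.defZ lam (fun e => a * α e + b * β e + c * γ e) v =
      a * G.defZ lam α v + b * G.defZ lam β v + c * G.defZ lam γ v := by
  have key : ∀ (s : Finset G.E) (f : G.E → ℤ),
      ∑ e ∈ s, f e * (a * α e + b * β e + c * γ e) =
        a * ∑ e ∈ s, f e * α e + b * ∑ e ∈ s, f e * β e + c * ∑ e ∈ s, f e * γ e := by
    intro s f
    rw [Finset.mul_sum, Finset.mul_sum, Finset.mul_sum, ← Finset.sum_add_distrib,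
      ← Finset.sum_add_distrib]
    exact Finset.sum_congr rfl fun e _ => by ring
  unfold defZ
  have k1 := key (Finset.univ.filter fun e => G.t e = v) (fun e => G.epsZ lam e)
  have k2 := key (Finset.univ.filter fun e => G.o e = v) (fun _ => 1)
  simp only [one_mul] at k2
  rw [k1, k2]
  ring

lemma defZ_walkVec (lam : ℝ) {S : Set G.E} :
    ∀ {w : List (G.E × Bool)} {u v : G.V}, G.WalkValid S w u v → ∀ x,
      G.defZ lam (G.walkVec lam w) x =
        G.walkE lam w * (if v = x then 1 else 0) - (if u = x then 1 else 0) := by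
  intro w
  induction w with
  | nil =>
      intro u v h x
      cases h
      simp [walkVec, walkE, defZ]
  | cons s w ih =>
      intro u v h x
      obtain ⟨hS, hsrc, hw⟩ := h
      have ihx := ih hw x
      obtain ⟨e, d⟩ := s
      have hcomb := G.defZ_comb lam 1 (G.epsZ lam e) 0
        (fun e' => if e' = e then (if d then 1 else -G.epsZ lam e) else 0)
        (G.walkVec lam w) (G.walkVec lam w) x
      have hvec : G.walkVec lam ((e, d) :: w) = fun e' =>
          1 * (if e' = e then (if d then 1 else -G.epsZ lam e) else 0) +
            G.epsZ lam e * G.walkVec lam w e' + 0 * G.walkVec lam w e' := by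
        funext e'; simp [walkVec]
      rw [hvec, hcomb, G.defZ_single, ihx]
      have hEw : G.walkE lam ((e, d) :: w) = G.epsZ lam e * G.walkE lam w := by
        simp [walkE]
      rw [hEw]
      rcases G.epsZ_eq_or lam e with hε | hε <;> rw [hε] <;>
        cases d <;> simp only [esrc, edst, if_true, if_false, Bool.false_eq_true] at hsrc ⊢ <;>
        subst hsrc <;> split_ifs <;> ring

lemma walkVec_supp (lam : ℝ) {S : Set G.E} :
    ∀ {w : List (G.E × Bool)} {u v : G.V}, G.WalkValid S w u v →
      ∀ e, e ∉ S → G.walkVec lam w e = 0 := by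
  intro w
  induction w with
  | nil => intro u v _ e _; rfl
  | cons s w ih =>
      intro u v h e he
      obtain ⟨hS, hsrc, hw⟩ := h
      have h1 : e ≠ s.1 := fun h' => he (h' ▸ hS)
      simp [walkVec, if_neg h1, ih hw e he]

lemma walkVec_not_mem (lam : ℝ) :
    ∀ (w : List (G.E × Bool)) (e : G.E), e ∉ w.map Prod.fst → G.walkVec lam w e = 0 := by
  intro w
  induction w with
  | nil => intro e _; rfl
  | cons s w ih =>
      intro e he
      simp only [List.map_cons, List.mem_cons, not_or] at he
      simp [walkVec, if_neg he.1, ih e he.2]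

lemma walkVec_odd (lam : ℝ) :
    ∀ (w : List (G.E × Bool)) (e : G.E), (w.map Prod.fst).count e = 1 →
      Odd (G.walkVec lam w e) := by
  intro w
  induction w with
  | nil => intro e h; simp at h
  | cons s w ih =>
      intro e h
      by_cases he : e = s.1
      · have hcnt : (w.map Prod.fst).count e = 0 := by
          simp only [List.map_cons, List.count_cons, beq_iff_eq, if_pos he.symm] at h
          omega
        have h0 : G.walkVec lam w e = 0 :=
          G.walkVec_not_mem lam w e (List.count_eq_zero.mp hcnt)
        have : G.walkVec lam (s :: w) e = (if s.2 then 1 else -G.epsZ lam s.1) := by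
          simp [walkVec, if_pos he, h0]
        rw [this]
        cases hs : s.2
        · simpa using (G.epsZ_odd lam s.1).neg
        · simp
      · have hcnt : (w.map Prod.fst).count e = 1 := by
          simp only [List.map_cons, List.count_cons, beq_iff_eq, if_neg (Ne.symm he)] at h
          omega
        have : G.walkVec lam (s :: w) e = G.epsZ lam s.1 * G.walkVec lam w e := by
          simp [walkVec, if_neg he]
        rw [this]
        exact (G.epsZ_odd lam s.1).mul (ih e hcnt)

lemma walkE_odd (lam : ℝ) : ∀ (w : List (G.E × Bool)), Odd (G.walkE lam w) := by
  intro w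
  induction w with
  | nil => exact ⟨0, rfl⟩
  | cons s w ih =>
      have : G.walkE lam (s :: w) = G.epsZ lam s.1 * G.walkE lam w := by simp [walkE]
      rw [this]
      exact (G.epsZ_odd lam s.1).mul ih

/-- The walk associated to a cycle. -/
def cycleWalk (c : G.Cycle) : List (G.E × Bool) :=
  (List.finRange c.n).map fun i => (c.edge i, c.dir i)

lemma cycleWalk_valid_aux {S : Set G.E} (c : G.Cycle) (hc : c.inSub S) :
    ∀ (k j : ℕ), j + k = c.n →
      G.WalkValid S (((List.finRange c.n).drop j).map fun i => (c.edge i, c.dir i))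
        (if hj : j < c.n then G.esrc (c.edge ⟨j, hj⟩) (c.dir ⟨j, hj⟩) else c.start)
        c.start := by
  intro k
  induction k with
  | zero =>
      intro j hj
      have hjn : j = c.n := by omega
      subst hjn
      rw [dif_neg (lt_irrefl _)]
      rw [List.drop_of_length_le (by simp)]
      exact rfl
  | succ k ih =>
      intro j hjk
      have hj : j < c.n := by omega
      rw [dif_pos hj]
      have hlen : j < (List.finRange c.n).length := by simpa using hj
      rw [List.drop_eq_getElem_cons hlen, List.map_cons]
      have hget : (List.finRange c.n)[j] = (⟨j, hj⟩ : Fin c.n) := by simp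
      rw [hget]
      refine ⟨hc _, rfl, ?_⟩
      have ihj := ih (j + 1) (by omega)
      have hchain := c.chain ⟨j, hj⟩
      rcases Nat.lt_or_ge (j + 1) c.n with h1 | h1
      · rw [dif_pos h1] at ihj
        have hfin : (⟨(j + 1) % c.n, Nat.mod_lt _ c.npos⟩ : Fin c.n) = ⟨j + 1, h1⟩ :=
          Fin.ext (Nat.mod_eq_of_lt h1)
        rw [hfin] at hchain
        rw [hchain]
        exact ihj
      · rw [dif_neg (by omega)] at ihj
        have hj1 : j + 1 = c.n := by omega
        have hfin : (⟨(j + 1) % c.n, Nat.mod_lt _ c.npos⟩ : Fin c.n) = ⟨0, c.npos⟩ := by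
          apply Fin.ext
          simp [hj1]
        rw [hfin] at hchain
        have hstart : G.esrc (c.edge ⟨0, c.npos⟩) (c.dir ⟨0, c.npos⟩) = c.start := rfl
        rw [hchain, hstart]
        exact ihj

lemma cycleWalk_valid {S : Set G.E} (c : G.Cycle) (hc : c.inSub S) :
    G.WalkValid S (G.cycleWalk c) c.start c.start := by
  have h := G.cycleWalk_valid_aux c hc c.n 0 (by omega)
  rw [dif_pos c.npos] at h
  simpa [cycleWalk, Cycle.start] using h

lemma cycleWalk_map_fst (c : G.Cycle) :
    (G.cycleWalk c).map Prod.fst = (List.finRange c.n).map fun i => c.edge i := by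
  simp [cycleWalk, List.map_map, Function.comp_def]

lemma cycleWalk_count (c : G.Cycle) (i : Fin c.n) :
    ((G.cycleWalk c).map Prod.fst).count (c.edge i) = 1 := by
  rw [G.cycleWalk_map_fst]
  apply List.count_eq_one_of_mem
  · exact (List.nodup_finRange c.n).map c.edge_inj
  · exact List.mem_map.mpr ⟨i, List.mem_finRange i, rfl⟩

lemma cycleWalk_not_mem (c : G.Cycle) {e : G.E} (he : e ∉ Set.range c.edge) :
    e ∉ (G.cycleWalk c).map Prod.fst := by
  rw [G.cycleWalk_map_fst]
  intro hmem
  obtain ⟨i, _, hi⟩ := List.mem_map.mp hmem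
  exact he ⟨i, hi⟩

lemma walkE_cycleWalk {lam : ℝ} (hlam : 0 < lam) (c : G.Cycle)
    (hc : c.inSub (G.lamEdges lam)) (hodd : c.oddLength (π / Real.sqrt lam)) :
    G.walkE lam (G.cycleWalk c) = -1 := by
  have hE : G.walkE lam (G.cycleWalk c) = ∏ i : Fin c.n, G.epsZ lam (c.edge i) := by
    rw [walkE, cycleWalk, List.map_map]
    rw [Fin.prod_univ_def]
    rfl
  obtain ⟨m, hm, hlen⟩ := hodd
  have hu : (0 : ℝ) < π / Real.sqrt lam :=
    div_pos Real.pi_pos (Real.sqrt_pos.mpr hlam)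
  have hsum : (∑ i : Fin c.n, G.kappa lam (c.edge i)) = m := by
    have h1 : ((∑ i : Fin c.n, G.kappa lam (c.edge i) : ℕ) : ℝ) * (π / Real.sqrt lam) =
        (m : ℝ) * (π / Real.sqrt lam) := by
      push_cast
      rw [Finset.sum_mul]
      rw [← hlen]
      unfold Cycle.length
      exact Finset.sum_congr rfl fun i _ => ((G.kappa_spec (hc i)).2).symm
    have h2 := mul_right_cancel₀ (ne_of_gt hu) h1
    exact_mod_cast h2
  rw [hE]
  have : ∏ i : Fin c.n, G.epsZ lam (c.edge i) =
      (-1 : ℤ) ^ (∑ i : Fin c.n, G.kappa lam (c.edge i)) := by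
    rw [← Finset.prod_pow_eq_pow_sum]
    rfl
  rw [this, hsum]
  exact hm.neg_one_pow

end MetricGraph

section DerivLemmas

open Complex in
lemma hasDerivAt_csin_line (ω : ℝ) (x : ℝ) :
    HasDerivAt (fun y : ℝ => Complex.sin ((ω : ℂ) * y)) ((ω : ℂ) * Complex.cos ((ω : ℂ) * x)) x := by
  have h1 : HasDerivAt (fun z : ℂ => (ω : ℂ) * z) (ω : ℂ) (x : ℂ) := by
    simpa using (hasDerivAt_id (x : ℂ)).const_mul (ω : ℂ)
  have h2 : HasDerivAt Complex.sin (Complex.cos ((ω : ℂ) * x)) ((ω : ℂ) * x) :=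
    Complex.hasDerivAt_sin _
  have h3 := (h2.comp (x : ℂ) h1).comp_ofReal
  simpa [mul_comm] using h3

open Complex in
lemma hasDerivAt_ccos_line (ω : ℝ) (x : ℝ) :
    HasDerivAt (fun y : ℝ => Complex.cos ((ω : ℂ) * y))
      (-((ω : ℂ) * Complex.sin ((ω : ℂ) * x))) x := by
  have h1 : HasDerivAt (fun z : ℂ => (ω : ℂ) * z) (ω : ℂ) (x : ℂ) := by
    simpa using (hasDerivAt_id (x : ℂ)).const_mul (ω : ℂ)
  have h2 : HasDerivAt Complex.cos (-Complex.sin ((ω : ℂ) * x)) ((ω : ℂ) * x) :=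
    Complex.hasDerivAt_cos _
  have h3 := (h2.comp (x : ℂ) h1).comp_ofReal
  simpa [mul_comm] using h3

lemma contDiff_csin_line (ω : ℝ) (c : ℂ) :
    ContDiff ℝ 2 (fun x : ℝ => c * Complex.sin ((ω : ℂ) * x)) := by
  have h1 : ContDiff ℝ 2 (fun x : ℝ => (ω : ℂ) * (x : ℂ)) :=
    contDiff_const.mul (Complex.ofRealCLM.contDiff.of_le le_top)
  exact contDiff_const.mul ((Complex.contDiff_sin.restrict_scalars ℝ).comp h1)

end DerivLemmas

/-- if some connected component of `G_λ` contains two cycles with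
distinct edge sets, each of odd length with respect to `π/√λ`, then `λ` is a resonance
of `G`. -/
theorem statement_7 (G : MetricGraph) (lam : ℝ) (hlam : 0 < lam)
    (c₁ c₂ : G.Cycle)
    (h₁ : c₁.inSub (G.lamEdges lam)) (h₂ : c₂.inSub (G.lamEdges lam))
    (hodd₁ : c₁.oddLength (π / Real.sqrt lam)) (hodd₂ : c₂.oddLength (π / Real.sqrt lam))
    (hdistinct : Set.range c₁.edge ≠ Set.range c₂.edge)
    (hsame : G.connRel (G.lamEdges lam) c₁.start c₂.start) :
    G.IsResonance lam := by
  have hω : (0 : ℝ) < Real.sqrt lam := Real.sqrt_pos.mpr hlam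
  set ω : ℝ := Real.sqrt lam with hωdef
  set S : Set G.E := G.lamEdges lam with hSdef
  obtain ⟨p, hp⟩ := G.exists_walk hsame
  set w₁ := G.cycleWalk c₁ with hw₁def
  set w₂ := G.cycleWalk c₂ with hw₂def
  have hv₁ : G.WalkValid S w₁ c₁.start c₁.start := G.cycleWalk_valid c₁ h₁
  have hv₂ : G.WalkValid S w₂ c₂.start c₂.start := G.cycleWalk_valid c₂ h₂
  have hE₁ : G.walkE lam w₁ = -1 := G.walkE_cycleWalk hlam c₁ h₁ hodd₁
  have hE₂ : G.walkE lam w₂ = -1 := G.walkE_cycleWalk hlam c₂ h₂ hodd₂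
  set Ep := G.walkE lam p with hEpdef
  set g : G.E → ℤ := fun e =>
    1 * G.walkVec lam w₁ e + (-2) * G.walkVec lam p e + (-Ep) * G.walkVec lam w₂ e
    with hgdef
  have hdef : ∀ v, G.defZ lam g v = 0 := by
    intro v
    rw [hgdef, G.defZ_comb, G.defZ_walkVec lam hv₁ v, G.defZ_walkVec lam hp v,
      G.defZ_walkVec lam hv₂ v, hE₁, hE₂]
    split_ifs <;> ring
  have hsupp : ∀ e, e ∉ S → g e = 0 := by
    intro e he
    rw [hgdef]
    beta_reduce
    rw [G.walkVec_supp lam hv₁ e he, G.walkVec_supp lam hp e he,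
      G.walkVec_supp lam hv₂ e he]
    ring
  obtain ⟨e₀, he₀⟩ : ∃ e, (e ∈ Set.range c₁.edge ∧ e ∉ Set.range c₂.edge) ∨
      (e ∈ Set.range c₂.edge ∧ e ∉ Set.range c₁.edge) := by
    by_contra hcon
    push_neg at hcon
    apply hdistinct
    ext e
    have h := hcon e
    constructor <;> intro h1 <;> by_contra h2 <;> tauto
  have hoddg : Odd (g e₀) := by
    rw [hgdef]
    beta_reduce
    rcases he₀ with ⟨⟨i, hi⟩, hnot⟩ | ⟨⟨i, hi⟩, hnot⟩
    · have o1 : Odd (G.walkVec lam w₁ e₀) := by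
        apply G.walkVec_odd
        rw [← hi]
        exact G.cycleWalk_count c₁ i
      have z2 : G.walkVec lam w₂ e₀ = 0 :=
        G.walkVec_not_mem lam w₂ e₀ (G.cycleWalk_not_mem c₂ hnot)
      have hrw : 1 * G.walkVec lam w₁ e₀ + (-2) * G.walkVec lam p e₀ +
          (-Ep) * G.walkVec lam w₂ e₀ =
          G.walkVec lam w₁ e₀ - 2 * G.walkVec lam p e₀ := by rw [z2]; ring
      rw [hrw]
      exact o1.sub_even (even_two_mul _)
    · have o2 : Odd (G.walkVec lam w₂ e₀) := by
        apply G.walkVec_odd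
        rw [← hi]
        exact G.cycleWalk_count c₂ i
      have z1 : G.walkVec lam w₁ e₀ = 0 :=
        G.walkVec_not_mem lam w₁ e₀ (G.cycleWalk_not_mem c₁ hnot)
      have hrw : 1 * G.walkVec lam w₁ e₀ + (-2) * G.walkVec lam p e₀ +
          (-Ep) * G.walkVec lam w₂ e₀ =
          (-(2 * G.walkVec lam p e₀)) - Ep * G.walkVec lam w₂ e₀ := by rw [z1]; ring
      rw [hrw]
      exact ((even_two_mul _).neg).sub_odd ((G.walkE_odd lam p).mul o2)
  have hne : g e₀ ≠ 0 := by
    intro h0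
    rw [h0] at hoddg
    exact (by decide : ¬ Odd (0 : ℤ)) hoddg
  -- the eigenfunction
  set f : G.E → ℝ → ℂ := fun e x => ((g e : ℤ) : ℂ) * Complex.sin ((ω : ℂ) * x) with hfdef
  have hmemS : ∀ e, g e ≠ 0 → e ∈ S := by
    intro e hg
    by_contra h
    exact hg (hsupp e h)
  have hprod : ∀ e ∈ S, ((ω : ℂ) * ((G.L e : ℝ) : ℂ)) = (((G.kappa lam e) * π : ℝ) : ℂ) := by
    intro e he
    obtain ⟨hk, hL⟩ := G.kappa_spec he
    rw [← Complex.ofReal_mul]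
    congr 1
    rw [hL, hωdef]
    field_simp
  have hsinL : ∀ e ∈ S, Complex.sin ((ω : ℂ) * ((G.L e : ℝ) : ℂ)) = 0 := by
    intro e he
    rw [hprod e he, ← Complex.ofReal_sin, Real.sin_nat_mul_pi]
    exact Complex.ofReal_zero
  have hcosL : ∀ e ∈ S, Complex.cos ((ω : ℂ) * ((G.L e : ℝ) : ℂ)) =
      ((G.epsZ lam e : ℤ) : ℂ) := by
    intro e he
    rw [hprod e he, ← Complex.ofReal_cos]
    have hc : Real.cos ((G.kappa lam e : ℝ) * π) = (-1) ^ (G.kappa lam e) := by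
      simpa using Real.cos_nat_mul_pi_sub 0 (G.kappa lam e)
    rw [hc]
    unfold MetricGraph.epsZ
    push_cast
    ring
  have hz0 : ∀ e, f e 0 = 0 := by
    intro e
    rw [hfdef]
    simp
  have hzL : ∀ e, f e (G.L e) = 0 := by
    intro e
    by_cases hg : g e = 0
    · rw [hfdef]
      simp [hg]
    · rw [hfdef]
      simp only
      rw [hsinL e (hmemS e hg), mul_zero]
  have hderiv1 : ∀ e x, deriv (f e) x =
      ((g e : ℤ) : ℂ) * ((ω : ℂ) * Complex.cos ((ω : ℂ) * x)) := by
    intro e x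
    exact ((hasDerivAt_csin_line ω x).const_mul ((g e : ℤ) : ℂ)).deriv
  have hderivfun : ∀ e, deriv (f e) =
      fun x : ℝ => ((g e : ℤ) : ℂ) * (ω : ℂ) * Complex.cos ((ω : ℂ) * x) := by
    intro e
    funext x
    rw [hderiv1 e x, mul_assoc]
  have hω2 : (ω : ℂ) * (ω : ℂ) = (lam : ℂ) := by
    rw [← Complex.ofReal_mul, hωdef, Real.mul_self_sqrt hlam.le]
  have hode : ∀ e, ∀ x : ℝ, deriv (deriv (f e)) x = -(lam : ℂ) * f e x := by
    intro e x
    rw [hderivfun e]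
    have h2 := ((hasDerivAt_ccos_line ω x).const_mul
      (((g e : ℤ) : ℂ) * (ω : ℂ))).deriv
    rw [h2, hfdef]
    simp only
    calc ((g e : ℤ) : ℂ) * (ω : ℂ) * -((ω : ℂ) * Complex.sin ((ω : ℂ) * x))
        = -((ω : ℂ) * (ω : ℂ)) * (((g e : ℤ) : ℂ) * Complex.sin ((ω : ℂ) * x)) := by ring
      _ = -(lam : ℂ) * (((g e : ℤ) : ℂ) * Complex.sin ((ω : ℂ) * x)) := by rw [hω2]
  have hcd : ∀ e, ContDiff ℝ 2 (f e) := by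
    intro e
    rw [hfdef]
    exact contDiff_csin_line ω _
  have hcv : G.ContVert f := by
    refine ⟨?_, ?_, ?_⟩
    · intro e₁ e₂ _
      rw [hz0 e₁, hz0 e₂]
    · intro e₁ e₂ _
      rw [hz0 e₁, hzL e₂]
    · intro e₁ e₂ _
      rw [hzL e₁, hzL e₂]
  have hndL : ∀ e, deriv (f e) (G.L e) =
      (ω : ℂ) * (((G.epsZ lam e * g e : ℤ) : ℤ) : ℂ) := by
    intro e
    rw [hderiv1 e (G.L e)]
    by_cases hg : g e = 0
    · rw [hg]
      push_cast
      ring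
    · rw [hcosL e (hmemS e hg)]
      push_cast
      ring
  have hnd0 : ∀ e, deriv (f e) 0 = (ω : ℂ) * ((g e : ℤ) : ℂ) := by
    intro e
    rw [hderiv1 e 0]
    rw [show ((0 : ℝ) : ℂ) = 0 from Complex.ofReal_zero, mul_zero, Complex.cos_zero, mul_one]
    ring
  have hnd : ∀ v, G.normDer f v = 0 := by
    intro v
    have key : G.normDer f v = (ω : ℂ) * ((G.defZ lam g v : ℤ) : ℂ) := by
      unfold MetricGraph.normDer MetricGraph.defZ
      push_cast
      rw [mul_sub, Finset.mul_sum, Finset.mul_sum]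
      congr 1
      · refine Finset.sum_congr rfl fun e _ => ?_
        rw [hndL e]
        push_cast
        ring
      · refine Finset.sum_congr rfl fun e _ => ?_
        rw [hnd0 e]
    rw [key, hdef v]
    simp
  have hmem : f ∈ G.resSet lam :=
    ⟨⟨⟨hcd, hode, hcv⟩, hnd⟩, fun e => ⟨hz0 e, hzL e⟩⟩
  unfold MetricGraph.IsResonance
  intro heq
  rw [heq, Set.mem_singleton_iff] at hmem
  have hfx : f e₀ (π / (2 * ω)) = ((g e₀ : ℤ) : ℂ) := by
    rw [hfdef]
    simp only
    have harg : (ω : ℂ) * ((π / (2 * ω) : ℝ) : ℂ) = (((π / 2 : ℝ)) : ℂ) := by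
      rw [← Complex.ofReal_mul]
      congr 1
      field_simp
    rw [harg, ← Complex.ofReal_sin, Real.sin_pi_div_two]
    simp
  rw [hmem] at hfx
  simp only [Pi.zero_apply] at hfx
  exact hne (by exact_mod_cast hfx.symm)
end
end

section
/- Let G be a finite metric graph and let λ_G := inf { π²/u_C² : C a cycle in G with commensurate edges }. Then G has no resonance in the interval (−∞, λ_G). -/
open Real Set Filter Topology

noncomputable section

namespace MGProof

open MetricGraph




lemma const_of_deriv_zero {g : ℝ → ℂ} (hg : ∀ x, HasDerivAt g 0 x) (x : ℝ) : g x = g 0 :=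
  is_const_of_deriv_eq_zero (fun y => (hg y).differentiableAt)
    (fun y => (hg y).deriv) x 0

lemma hasDerivAt_cexp_real (a : ℂ) (x : ℝ) :
    HasDerivAt (fun y : ℝ => Complex.exp (a * y)) (a * Complex.exp (a * x)) x := by
  have h : HasDerivAt (fun z : ℂ => Complex.exp (a * z)) (a * Complex.exp (a * x)) (x : ℂ) := by
    have := (Complex.hasDerivAt_exp (a * x)).comp (x : ℂ) ((hasDerivAt_id (x : ℂ)).const_mul a)
    rw [show a * Complex.exp (a * x) = Complex.exp (a * x) * (a * 1) by ring]; exact this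
  exact h.comp_ofReal

/-- Representation of global solutions of `f'' = c f` with `f 0 = 0`, `c = ω²`, `ω ≠ 0`. -/
lemma sol_rep {c ω : ℂ} (hω : ω ^ 2 = c) (hω0 : ω ≠ 0) {f : ℝ → ℂ}
    (hf : ContDiff ℝ 2 f) (hode : ∀ x, deriv (deriv f) x = c * f x) (h0 : f 0 = 0) :
    ∀ x, f x = (deriv f 0 / ω) * Complex.sinh (ω * x) := by
  have hf1 : Differentiable ℝ f := hf.differentiable (by norm_num)
  have hf2 : Differentiable ℝ (deriv f) := by
    have h := (contDiff_succ_iff_deriv (n := 1)).1 (by exact_mod_cast hf)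
    exact h.2.2.differentiable (by norm_num)
  have hdf : ∀ x, HasDerivAt f (deriv f x) x := fun x => (hf1 x).hasDerivAt
  have hddf : ∀ x, HasDerivAt (deriv f) (c * f x) x := fun x => by
    simpa [hode x] using (hf2 x).hasDerivAt
  set b := deriv f 0 with hb
  -- step 1 : (f' - ω f) e^{ωx} is constant
  have step1 : ∀ x, deriv f x - ω * f x = b * Complex.exp (-(ω * x)) := by
    have hq : ∀ x, HasDerivAt
        (fun x => (deriv f x - ω * f x) * Complex.exp (ω * x)) 0 x := by
      intro x
      have h1 : HasDerivAt (fun x => deriv f x - ω * f x) (c * f x - ω * deriv f x) x :=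
        (hddf x).sub ((hdf x).const_mul ω)
      have h3 := h1.mul (hasDerivAt_cexp_real ω x)
      have he : (c * f x - ω * deriv f x) * Complex.exp (ω * x)
          + (deriv f x - ω * f x) * (ω * Complex.exp (ω * x)) = 0 := by
        rw [← hω]; ring
      rw [← he]; exact h3
    intro x
    have := const_of_deriv_zero hq x
    simp only [Complex.ofReal_zero, mul_zero, Complex.exp_zero, mul_one, h0, sub_zero] at this
    have hne : Complex.exp (ω * x) ≠ 0 := Complex.exp_ne_zero _
    rw [Complex.exp_neg]
    field_simp
    linear_combination this
  -- step 2 : f e^{-ωx} + (b/(2ω)) e^{-2ωx} is constant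
  have step2 : ∀ x, f x * Complex.exp (-(ω * x))
      + (b / (2 * ω)) * Complex.exp (-(2 * ω) * x) = b / (2 * ω) := by
    have hg : ∀ x, HasDerivAt (fun x => f x * Complex.exp (-(ω * x))
        + (b / (2 * ω)) * Complex.exp (-(2 * ω) * x)) 0 x := by
      intro x
      have h1 : HasDerivAt (fun x : ℝ => Complex.exp (-(ω * x)))
          (-ω * Complex.exp (-ω * x)) x := by
        simpa [neg_mul] using hasDerivAt_cexp_real (-ω) x
      have h2 := (hdf x).mul h1
      have h3 : HasDerivAt (fun x : ℝ => (b / (2 * ω)) * Complex.exp (-(2 * ω) * x))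
          ((b / (2 * ω)) * ((-(2 * ω)) * Complex.exp (-(2 * ω) * x))) x :=
        (hasDerivAt_cexp_real (-(2 * ω)) x).const_mul _
      have h4 := h2.add h3
      have he : deriv f x * Complex.exp (-(ω * x)) + f x * (-ω * Complex.exp (-ω * x))
          + (b / (2 * ω)) * ((-(2 * ω)) * Complex.exp (-(2 * ω) * x)) = 0 := by
        have hs := step1 x
        have hexp : Complex.exp (-(2 * ω) * x)
            = Complex.exp (-(ω * x)) * Complex.exp (-(ω * x)) := by
          rw [← Complex.exp_add]; ring_nf
        rw [hexp]
        have : deriv f x = ω * f x + b * Complex.exp (-(ω * x)) := by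
          linear_combination hs
        rw [this]
        field_simp
        ring
      rw [← he]; exact h4
    intro x
    have := const_of_deriv_zero hg x
    simpa [h0] using this
  intro x
  have hs2 := step2 x
  have hne : Complex.exp (-(ω * x)) ≠ 0 := Complex.exp_ne_zero _
  have hexp : Complex.exp (-(2 * ω) * x) = Complex.exp (-(ω * x)) * Complex.exp (-(ω * x)) := by
    rw [← Complex.exp_add]; ring_nf
  rw [hexp] at hs2
  have eE : Complex.exp (ω * x) * Complex.exp (-(ω * x)) = 1 := by
    rw [← Complex.exp_add]; simp
  field_simp at hs2
  -- hs2 (cleared) : some polynomial identity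
  have key : 2 * ω * f x = b * (Complex.exp (ω * x) - Complex.exp (-(ω * x))) := by
    linear_combination Complex.exp (ω * x) * hs2
      - (2 * ω * f x + b * Complex.exp (-(ω * x))) * eE
  have hsinh : Complex.sinh (ω * x)
      = (Complex.exp (ω * x) - Complex.exp (-(ω * x))) / 2 := by
    rw [Complex.sinh]
  rw [hsinh]
  field_simp
  linear_combination key



lemma hasDerivAt_csinh_real (a : ℂ) (x : ℝ) :
    HasDerivAt (fun y : ℝ => Complex.sinh (a * y)) (a * Complex.cosh (a * x)) x := by
  have h : HasDerivAt (fun z : ℂ => Complex.sinh (a * z)) (a * Complex.cosh (a * x)) (x : ℂ) := by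
    have := (Complex.hasDerivAt_sinh (a * x)).comp (x : ℂ) ((hasDerivAt_id (x : ℂ)).const_mul a)
    rw [show a * Complex.cosh (a * x) = Complex.cosh (a * x) * (a * 1) by ring]; exact this
  exact h.comp_ofReal

lemma sol_deriv {c ω : ℂ} (hω : ω ^ 2 = c) (hω0 : ω ≠ 0) {f : ℝ → ℂ}
    (hf : ContDiff ℝ 2 f) (hode : ∀ x, deriv (deriv f) x = c * f x) (h0 : f 0 = 0) :
    ∀ x, deriv f x = deriv f 0 * Complex.cosh (ω * x) := by
  intro x
  set b := deriv f 0 with hb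
  have hfe : f = fun y : ℝ => (b / ω) * Complex.sinh (ω * y) :=
    funext (sol_rep hω hω0 hf hode h0)
  have h := (hasDerivAt_csinh_real ω x).const_mul (b / ω)
  calc deriv f x = deriv (fun y : ℝ => (b / ω) * Complex.sinh (ω * y)) x := by rw [← hfe]
    _ = (b / ω) * (ω * Complex.cosh (ω * x)) := h.deriv
    _ = b * Complex.cosh (ω * x) := by field_simp

lemma edge_neg {lam L : ℝ} (hlam : lam < 0) (hL : 0 < L) {f : ℝ → ℂ}
    (hf : ContDiff ℝ 2 f) (hode : ∀ x, deriv (deriv f) x = -(lam : ℂ) * f x)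
    (h0 : f 0 = 0) (hLv : f L = 0) : ∀ x, f x = 0 := by
  have hpos : 0 < -lam := by linarith
  set ω : ℂ := ((Real.sqrt (-lam) : ℝ) : ℂ) with hωdef
  have hω : ω ^ 2 = -(lam : ℂ) := by
    rw [hωdef]
    norm_cast
    rw [Real.sq_sqrt hpos.le]
  have hω0 : ω ≠ 0 := by
    have : Real.sqrt (-lam) ≠ 0 := (Real.sqrt_pos.2 hpos).ne'
    exact Complex.ofReal_ne_zero.2 this
  have rep := sol_rep hω hω0 hf hode h0
  have hsL : Complex.sinh (ω * L) = ((Real.sinh (Real.sqrt (-lam) * L) : ℝ) : ℂ) := by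
    rw [Complex.ofReal_sinh]; push_cast [hωdef]; ring_nf
  have hsne : Complex.sinh (ω * L) ≠ 0 := by
    rw [hsL]
    have : 0 < Real.sinh (Real.sqrt (-lam) * L) :=
      Real.sinh_pos_iff.2 (by positivity)
    exact_mod_cast this.ne'
  have hb : deriv f 0 = 0 := by
    have := rep L
    rw [hLv] at this
    have := this.symm
    rcases mul_eq_zero.1 this with h | h
    · rcases div_eq_zero_iff.1 h with h | h
      · exact h
      · exact absurd h hω0
    · exact absurd h hsne
  intro x
  rw [rep x, hb]
  simp

lemma edge_zero {L : ℝ} (hL : 0 < L) {f : ℝ → ℂ}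
    (hf : ContDiff ℝ 2 f) (hode : ∀ x, deriv (deriv f) x = 0)
    (h0 : f 0 = 0) (hLv : f L = 0) : ∀ x, f x = 0 := by
  have hf1 : Differentiable ℝ f := hf.differentiable (by norm_num)
  have hf2 : Differentiable ℝ (deriv f) := by
    have h := (contDiff_succ_iff_deriv (n := 1)).1 (by exact_mod_cast hf)
    exact h.2.2.differentiable (by norm_num)
  have hconst : ∀ x, deriv f x = deriv f 0 := by
    intro x
    exact const_of_deriv_zero (fun y => by simpa [hode y] using (hf2 y).hasDerivAt) x
  set b := deriv f 0 with hb
  have hlin : ∀ x, f x = b * x := by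
    intro x
    have hg : ∀ y : ℝ, HasDerivAt (fun y : ℝ => f y - b * y) 0 y := by
      intro y
      have h1 : HasDerivAt f b y := by
        have := (hf1 y).hasDerivAt; rwa [hconst y] at this
      have h2 : HasDerivAt (fun y : ℝ => b * (y : ℂ)) b y := by
        simpa using ((hasDerivAt_id (y : ℂ)).const_mul b).comp_ofReal
      have h3 := h1.sub h2; rw [sub_self] at h3; exact h3
    have := const_of_deriv_zero hg x
    simp only [Complex.ofReal_zero, mul_zero, h0, sub_zero] at this
    linear_combination this
  have hbz : b = 0 := by
    have := hlin L
    rw [hLv] at this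
    rcases mul_eq_zero.1 this.symm with h | h
    · exact h
    · exact absurd h (by exact_mod_cast hL.ne')
  intro x; rw [hlin x, hbz, zero_mul]

lemma cos_nat_pi (k : ℕ) : Real.cos (k * π) = (-1 : ℝ) ^ k := by
  induction k with
  | zero => simp
  | succ n ih =>
    have : ((n + 1 : ℕ) : ℝ) * π = n * π + π := by push_cast; ring
    rw [this, Real.cos_add_pi, ih, pow_succ]
    ring

lemma edge_pos {lam L : ℝ} (hlam : 0 < lam) (hL : 0 < L) {f : ℝ → ℂ}
    (hf : ContDiff ℝ 2 f) (hode : ∀ x, deriv (deriv f) x = -(lam : ℂ) * f x)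
    (h0 : f 0 = 0) (hLv : f L = 0) :
    (deriv f 0 = 0 → ∀ x, f x = 0) ∧
    (deriv f 0 ≠ 0 → ∃ k : ℕ, 0 < k ∧ L = k * (π / Real.sqrt lam) ∧
      deriv f L = (-1 : ℂ) ^ k * deriv f 0) := by
  have hs : 0 < Real.sqrt lam := Real.sqrt_pos.2 hlam
  set ω : ℂ := ((Real.sqrt lam : ℝ) : ℂ) * Complex.I with hωdef
  have hω : ω ^ 2 = -(lam : ℂ) := by
    have h1 : ω ^ 2 = (((Real.sqrt lam) ^ 2 : ℝ) : ℂ) * Complex.I ^ 2 := by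
      rw [hωdef]; push_cast; ring
    rw [h1, Complex.I_sq, Real.sq_sqrt hlam.le]; ring
  have hω0 : ω ≠ 0 := by
    simp [hωdef, Complex.ext_iff]
    intro h; exact absurd h hs.ne'
  have rep := sol_rep hω hω0 hf hode h0
  have hsinh : ∀ y : ℝ, Complex.sinh (ω * y)
      = ((Real.sin (Real.sqrt lam * y) : ℝ) : ℂ) * Complex.I := by
    intro y
    have : ω * (y : ℂ) = ((Real.sqrt lam * y : ℝ) : ℂ) * Complex.I := by
      push_cast [hωdef]; ring
    rw [this, Complex.sinh_mul_I, Complex.ofReal_sin]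
  constructor
  · intro hb x
    rw [rep x, hb]
    simp
  · intro hb
    have hsinL : Real.sin (Real.sqrt lam * L) = 0 := by
      have := rep L
      rw [hLv, hsinh L] at this
      have h2 := this.symm
      rcases mul_eq_zero.1 h2 with h | h
      · exfalso
        rcases div_eq_zero_iff.1 h with h' | h'
        · exact hb h'
        · exact hω0 h'
      · rcases mul_eq_zero.1 h with h | h
        · exact_mod_cast h
        · exact absurd h Complex.I_ne_zero
    obtain ⟨n, hn⟩ := Real.sin_eq_zero_iff.1 hsinL
    have hnpos : 0 < n := by
      by_contra hc
      push_neg at hc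
      have : (n : ℝ) * π ≤ 0 := mul_nonpos_of_nonpos_of_nonneg (by exact_mod_cast hc) pi_pos.le
      nlinarith [mul_pos hs hL]
    refine ⟨n.toNat, by omega, ?_, ?_⟩
    · have hcastn : ((n.toNat : ℕ) : ℝ) = (n : ℝ) := by
        exact_mod_cast congrArg (Int.cast : ℤ → ℝ) (Int.toNat_of_nonneg hnpos.le)
      have hn' : (n.toNat : ℝ) * π = Real.sqrt lam * L := by rw [hcastn]; exact hn
      field_simp
      linarith [hn']
    · have hder := sol_deriv hω hω0 hf hode h0 L
      have hcosh : Complex.cosh (ω * L) = ((Real.cos (Real.sqrt lam * L) : ℝ) : ℂ) := by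
        have : ω * (L : ℂ) = ((Real.sqrt lam * L : ℝ) : ℂ) * Complex.I := by
          push_cast [hωdef]; ring
        rw [this, Complex.cosh_mul_I, Complex.ofReal_cos]
      have hceq : Real.cos (Real.sqrt lam * L) = (-1 : ℝ) ^ n.toNat := by
        have hcastn : ((n.toNat : ℕ) : ℝ) = (n : ℝ) := by
          exact_mod_cast congrArg (Int.cast : ℤ → ℝ) (Int.toNat_of_nonneg hnpos.le)
        have hn' : Real.sqrt lam * L = (n.toNat : ℝ) * π := by rw [hcastn]; exact hn.symm
        rw [hn', cos_nat_pi]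
      rw [hder, hcosh, hceq]
      push_cast
      ring


lemma bool_eq_not {x y : Bool} (h : x ≠ y) : x = !y := by
  cases x <;> cases y <;> simp_all

lemma esrc_not (G : MetricGraph) (e : G.E) (d : Bool) : G.esrc e (!d) = G.edst e d := by
  cases d <;> rfl

lemma exists_cycle (G : MetricGraph) (S : Set G.E) (e₀ : G.E) (d₀ : Bool) (he₀ : e₀ ∈ S)
    (H : ∀ e ∈ S, ∀ d : Bool, ∃ p : G.E × Bool, p.1 ∈ S ∧
      G.esrc p.1 p.2 = G.edst e d ∧ p ≠ (e, !d)) :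
    ∃ c : G.Cycle, c.inSub S := by
  classical
  have step : ∀ p : {p : G.E × Bool // p.1 ∈ S}, ∃ q : {p : G.E × Bool // p.1 ∈ S},
      G.esrc q.1.1 q.1.2 = G.edst p.1.1 p.1.2 ∧ q.1 ≠ (p.1.1, !p.1.2) := by
    rintro ⟨⟨e, d⟩, he⟩
    obtain ⟨p, hp1, hp2, hp3⟩ := H e he d
    exact ⟨⟨p, hp1⟩, hp2, hp3⟩
  choose next hsrc hnb using step
  let h : ℕ → {p : G.E × Bool // p.1 ∈ S} := fun n => next^[n] ⟨(e₀, d₀), he₀⟩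
  have hsucc : ∀ n, h (n + 1) = next (h n) := fun n => Function.iterate_succ_apply' _ _ _
  let v : ℕ → G.V := fun n => G.esrc (h n).1.1 (h n).1.2
  have hvdef : ∀ n, v n = G.esrc (h n).1.1 (h n).1.2 := fun n => rfl
  have P1 : ∀ n, v (n + 1) = G.edst (h n).1.1 (h n).1.2 := by
    intro n; rw [hvdef, hsucc]; exact hsrc (h n)
  have P2 : ∀ n, (h (n + 1)).1 ≠ ((h n).1.1, !(h n).1.2) := by
    intro n; rw [hsucc]; exact hnb (h n)
  have hrep : ∃ j, ∃ i, i < j ∧ v i = v j := by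
    have hni : ¬ Function.Injective (fun i : Fin (Fintype.card G.V + 1) => v i) := by
      intro hinj
      simpa using Fintype.card_le_of_injective _ hinj
    rw [Function.not_injective_iff] at hni
    obtain ⟨a, b, hab, hne⟩ := hni
    rcases lt_or_gt_of_ne (fun hv : (a : ℕ) = (b : ℕ) => hne (Fin.ext hv)) with hlt | hlt
    · exact ⟨b, a, hlt, hab⟩
    · exact ⟨a, b, hlt, hab.symm⟩
  set j₀ := Nat.find hrep with hj₀
  obtain ⟨i₀, hij, hvij⟩ := Nat.find_spec hrep
  have inj : ∀ a b, a < j₀ → b < j₀ → v a = v b → a = b := by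
    intro a b ha hb hvab
    by_contra hne
    rcases lt_or_gt_of_ne hne with hlt | hlt
    · exact Nat.find_min hrep hb ⟨a, hlt, hvab⟩
    · exact Nat.find_min hrep ha ⟨b, hlt, hvab.symm⟩
  set n' := j₀ - i₀ with hn'
  have hn0 : 0 < n' := Nat.sub_pos_of_lt hij
  have hin : i₀ + n' = j₀ := Nat.add_sub_cancel' hij.le
  have key : ∀ k : ℕ, k < n' → v (i₀ + (k + 1) % n') = v (i₀ + k + 1) := by
    intro k hk
    by_cases heq : k + 1 = n'
    · rw [heq, Nat.mod_self, Nat.add_zero]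
      have h2 : i₀ + k + 1 = j₀ := by omega
      rw [h2]; exact hvij
    · have hlt : k + 1 < n' := by omega
      rw [Nat.mod_eq_of_lt hlt]
      rfl
  refine ⟨⟨n', hn0, fun k => (h (i₀ + (k : ℕ))).1.1, fun k => (h (i₀ + (k : ℕ))).1.2,
    ?_, ?_, ?_⟩, fun k => (h (i₀ + (k : ℕ))).2⟩
  · -- edge_inj
    intro k l hkl
    simp only at hkl
    by_cases hd : (h (i₀ + (k : ℕ))).1.2 = (h (i₀ + (l : ℕ))).1.2
    · have : v (i₀ + (k : ℕ)) = v (i₀ + (l : ℕ)) := by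
        rw [hvdef, hvdef, hkl, hd]
      have := inj _ _ (by omega) (by omega) this
      exact Fin.ext (by omega)
    · exfalso
      have hd' : (h (i₀ + (k : ℕ))).1.2 = !(h (i₀ + (l : ℕ))).1.2 := bool_eq_not hd
      have hkne : (k : ℕ) ≠ (l : ℕ) := by
        intro hc
        rw [hc] at hd; exact hd rfl
      have hva : v (i₀ + (k : ℕ)) = v (i₀ + (l : ℕ) + 1) := by
        rw [hvdef, hkl, hd', esrc_not, ← P1]
      have hvb : v (i₀ + (l : ℕ)) = v (i₀ + (k : ℕ) + 1) := by
        have hd'' : (h (i₀ + (l : ℕ))).1.2 = !(h (i₀ + (k : ℕ))).1.2 := by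
          rw [hd']; simp
        rw [hvdef, ← hkl, hd'', esrc_not, ← P1]
      have hk1 : (k : ℕ) = ((l : ℕ) + 1) % n' := by
        have := key (l : ℕ) l.isLt
        rw [← this] at hva
        have := inj _ _ (by omega) (by
          have := Nat.mod_lt ((l : ℕ) + 1) hn0; omega) hva
        omega
      have hl1 : (l : ℕ) = ((k : ℕ) + 1) % n' := by
        have := key (k : ℕ) k.isLt
        rw [← this] at hvb
        have := inj _ _ (by omega) (by
          have := Nat.mod_lt ((k : ℕ) + 1) hn0; omega) hvb
        omega
      -- derive n' ∣ 2
      have e1 : Nat.ModEq n' ((l : ℕ) + 1) (k : ℕ) := by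
        show ((l : ℕ) + 1) % n' = (k : ℕ) % n'
        rw [Nat.mod_eq_of_lt k.isLt]
        exact hk1.symm
      have e2 : Nat.ModEq n' ((k : ℕ) + 1) (l : ℕ) := by
        show ((k : ℕ) + 1) % n' = (l : ℕ) % n'
        rw [Nat.mod_eq_of_lt l.isLt]
        exact hl1.symm
      have e3 : Nat.ModEq n' ((k : ℕ) + 2) (k : ℕ) :=
        ((e2.add_right 1).trans e1)
      have hdvd : n' ∣ 2 := by
        have := (Nat.modEq_iff_dvd' (by omega : (k : ℕ) ≤ (k : ℕ) + 2)).1 e3.symm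
        simpa using this
      rcases (Nat.dvd_prime Nat.prime_two).1 hdvd with h1 | h2
      · have := k.isLt; have := l.isLt; omega
      · have hklt : (k : ℕ) < 2 := h2 ▸ k.isLt
        have hllt : (l : ℕ) < 2 := h2 ▸ l.isLt
        rcases (by omega : (l : ℕ) = (k : ℕ) + 1 ∨ (k : ℕ) = (l : ℕ) + 1) with hc | hc
        · apply P2 (i₀ + (k : ℕ))
          have hidx : i₀ + (l : ℕ) = i₀ + (k : ℕ) + 1 := by omega
          rw [← hidx]
          refine Prod.ext_iff.mpr ⟨hkl.symm, ?_⟩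
          show (h (i₀ + (l : ℕ))).1.2 = !(h (i₀ + (k : ℕ))).1.2
          rw [hd', Bool.not_not]
        · apply P2 (i₀ + (l : ℕ))
          have hidx : i₀ + (k : ℕ) = i₀ + (l : ℕ) + 1 := by omega
          rw [← hidx]
          exact Prod.ext_iff.mpr ⟨hkl, hd'⟩
  · -- vert_inj
    intro k l hkl
    simp only at hkl
    have := inj _ _ (by have := k.isLt; omega) (by have := l.isLt; omega) hkl
    exact Fin.ext (by omega)
  · -- chain
    intro k
    have h1 := P1 (i₀ + (k : ℕ))
    have h2 := key (k : ℕ) k.isLt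
    exact h1.symm.trans h2.symm

end MGProof

/-- Corollary `cor:soGehtsAuch`: with
`λ_G := inf { π²/u_C² : C a cycle in G with commensurate edges }` (`+∞` if there is no
such cycle), the graph `G` has no resonance in `(−∞, λ_G)`. -/
theorem statement_8 (G : MetricGraph) (lam : ℝ) (hlam : (lam : EReal) < G.lamThreshold) :
    ¬ G.IsResonance lam := by
  classical
  intro hres
  have hzmem : (0 : G.E → ℝ → ℂ) ∈ G.resSet lam := by
    refine ⟨⟨⟨fun e => ?_, fun e x => ?_,
      ⟨fun _ _ _ => rfl, fun _ _ _ => rfl, fun _ _ _ => rfl⟩⟩, fun v => ?_⟩, fun e => ⟨rfl, rfl⟩⟩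
    · show ContDiff ℝ 2 (fun _ : ℝ => (0 : ℂ))
      exact contDiff_const
    · show deriv (deriv (fun _ : ℝ => (0 : ℂ))) x = _
      simp
    · show MetricGraph.normDer G 0 v = 0
      have hd0 : deriv (0 : ℝ → ℂ) = fun _ => (0 : ℂ) := by
        funext y
        exact deriv_const y 0
      simp [MetricGraph.normDer, hd0]
  obtain ⟨f, hfmem, hfne⟩ : ∃ f ∈ G.resSet lam, f ≠ 0 := by
    by_contra hcon
    push_neg at hcon
    exact hres (Set.eq_singleton_iff_unique_mem.mpr ⟨hzmem, hcon⟩)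
  obtain ⟨⟨⟨hsm, hode, hcont⟩, hkir⟩, hdir⟩ := hfmem
  rcases lt_trichotomy lam 0 with hneg | hz | hpos
  · apply hfne
    funext e x
    rw [Pi.zero_apply, Pi.zero_apply]
    exact MGProof.edge_neg hneg (G.L_pos e) (hsm e) (hode e) (hdir e).1 (hdir e).2 x
  · apply hfne
    funext e x
    rw [Pi.zero_apply, Pi.zero_apply]
    refine MGProof.edge_zero (G.L_pos e) (hsm e) (fun y => ?_) (hdir e).1 (hdir e).2 x
    rw [hode e y, hz]
    simp
  · -- positive spectral parameter
    have hep : ∀ e : G.E,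
        (deriv (f e) 0 = 0 → ∀ x, f e x = 0) ∧
        (deriv (f e) 0 ≠ 0 → ∃ k : ℕ, 0 < k ∧ G.L e = k * (π / Real.sqrt lam) ∧
          deriv (f e) (G.L e) = (-1 : ℂ) ^ k * deriv (f e) 0) :=
      fun e => MGProof.edge_pos hpos (G.L_pos e) (hsm e) (hode e) (hdir e).1 (hdir e).2
    set u : ℝ := π / Real.sqrt lam with hu_def
    set S : Set G.E := {e | deriv (f e) 0 ≠ 0} with hS_def
    have hSdata : ∀ e ∈ S, ∃ k : ℕ, 0 < k ∧ G.L e = k * u ∧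
        deriv (f e) (G.L e) = (-1 : ℂ) ^ k * deriv (f e) 0 := fun e he => (hep e).2 he
    choose! kk hk1 hk2 hk3 using hSdata
    have hzeroE : ∀ e ∉ S, ∀ x, f e x = 0 := fun e he => (hep e).1 (not_not.1 he)
    have hzeroDL : ∀ e ∉ S, deriv (f e) (G.L e) = 0 := by
      intro e he
      have hfz : f e = fun _ => (0 : ℂ) := funext (hzeroE e he)
      rw [hfz]; simp
    obtain ⟨e₀, he₀⟩ : ∃ e, e ∈ S := by
      by_contra hcon
      push_neg at hcon
      apply hfne
      funext e x
      rw [Pi.zero_apply, Pi.zero_apply]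
      exact hzeroE e (hcon e) x
    have H : ∀ e ∈ S, ∀ d : Bool, ∃ p : G.E × Bool, p.1 ∈ S ∧
        G.esrc p.1 p.2 = G.edst e d ∧ p ≠ (e, !d) := by
      intro e he d
      by_contra hcon
      push_neg at hcon
      have hsum := hkir (G.edst e d)
      simp only [MetricGraph.normDer] at hsum
      cases d with
      | false =>
        -- v = o e ; incoming sum vanishes, outgoing sum is deriv (f e) 0 ≠ 0
        have hT : ∑ e' ∈ Finset.univ.filter (fun e' => G.t e' = G.edst e false),
            deriv (f e') (G.L e') = 0 := by
          refine Finset.sum_eq_zero fun e' he' => ?_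
          rw [Finset.mem_filter] at he'
          by_cases hS : e' ∈ S
          · exfalso
            have hq := hcon (e', false) hS (by
              show G.esrc e' false = G.edst e false
              simp [MetricGraph.esrc, he'.2])
            simpa using congrArg Prod.snd hq
          · exact hzeroDL e' hS
        have hO : ∑ e' ∈ Finset.univ.filter (fun e' => G.o e' = G.edst e false),
            deriv (f e') 0 = deriv (f e) 0 := by
          refine Finset.sum_eq_single_of_mem e (Finset.mem_filter.2 ⟨Finset.mem_univ _, rfl⟩)
            fun e' he' hne => ?_
          rw [Finset.mem_filter] at he'
          by_cases hS : e' ∈ S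
          · exfalso
            have hq := hcon (e', true) hS (by
              show G.esrc e' true = G.edst e false
              simp [MetricGraph.esrc, he'.2])
            exact hne (congrArg Prod.fst hq)
          · exact not_not.1 hS
        rw [hT, hO] at hsum
        apply he
        show deriv (f e) 0 = 0
        linear_combination -hsum
      | true =>
        have hT : ∑ e' ∈ Finset.univ.filter (fun e' => G.t e' = G.edst e true),
            deriv (f e') (G.L e') = deriv (f e) (G.L e) := by
          refine Finset.sum_eq_single_of_mem e (Finset.mem_filter.2 ⟨Finset.mem_univ _, rfl⟩)
            fun e' he' hne => ?_
          rw [Finset.mem_filter] at he'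
          by_cases hS : e' ∈ S
          · exfalso
            have hq := hcon (e', false) hS (by
              show G.esrc e' false = G.edst e true
              simp [MetricGraph.esrc, he'.2])
            exact hne (congrArg Prod.fst hq)
          · exact hzeroDL e' hS
        have hO : ∑ e' ∈ Finset.univ.filter (fun e' => G.o e' = G.edst e true),
            deriv (f e') 0 = 0 := by
          refine Finset.sum_eq_zero fun e' he' => ?_
          rw [Finset.mem_filter] at he'
          by_cases hS : e' ∈ S
          · exfalso
            have hq := hcon (e', true) hS (by
              show G.esrc e' true = G.edst e true
              simp [MetricGraph.esrc, he'.2])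
            simpa using congrArg Prod.snd hq
          · exact not_not.1 hS
        rw [hT, hO, sub_zero] at hsum
        rw [hk3 e he] at hsum
        have : deriv (f e) 0 = 0 := by
          have hne : ((-1 : ℂ) ^ kk e) ≠ 0 := pow_ne_zero _ (by norm_num)
          exact (mul_eq_zero.1 hsum).resolve_left hne
        exact he this
    obtain ⟨c, hcS⟩ := MGProof.exists_cycle G S e₀ true he₀ H
    have hspos : 0 < Real.sqrt lam := Real.sqrt_pos.2 hpos
    have hupos : 0 < u := div_pos pi_pos hspos
    have hLc : ∀ i, ∃ k : ℕ, 0 < k ∧ G.L (c.edge i) = k * u :=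
      fun i => ⟨kk (c.edge i), hk1 _ (hcS i), hk2 _ (hcS i)⟩
    have hcomm : G.Commensurate c := by
      intro i j
      obtain ⟨ki, hki, hLi⟩ := hLc i
      obtain ⟨kj, hkj, hLj⟩ := hLc j
      refine ⟨(ki : ℚ) / kj, ?_⟩
      rw [hLi, hLj]
      push_cast
      have hkj0 : (kj : ℝ) ≠ 0 := by exact_mod_cast hkj.ne'
      field_simp
    have huC : u ≤ G.uC c := by
      apply le_csSup
      · refine ⟨G.L (c.edge ⟨0, c.npos⟩), ?_⟩
        rintro x ⟨hx0, hx⟩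
        obtain ⟨k, hk, hL⟩ := hx ⟨0, c.npos⟩
        rw [hL]
        have h1k : (1 : ℝ) ≤ k := by exact_mod_cast hk
        nlinarith
      · exact ⟨hupos, hLc⟩
    have huCpos : 0 < G.uC c := lt_of_lt_of_le hupos huC
    have hbound : π ^ 2 / (G.uC c) ^ 2 ≤ lam := by
      have h4 : u ^ 2 ≤ (G.uC c) ^ 2 := by nlinarith
      have h2 : π ^ 2 / (G.uC c) ^ 2 ≤ π ^ 2 / u ^ 2 := by
        rw [div_le_div_iff₀ (by positivity) (by positivity)]
        exact mul_le_mul_of_nonneg_left h4 (sq_nonneg π)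
      have h3 : π ^ 2 / u ^ 2 = lam := by
        have hs2 : Real.sqrt lam ^ 2 = lam := Real.sq_sqrt hpos.le
        rw [hu_def, div_pow, hs2, div_div_eq_mul_div, mul_comm, mul_div_assoc,
          div_self (by positivity : (π : ℝ) ^ 2 ≠ 0), mul_one]
      rw [← h3]
      exact h2
    have hmem : ((π ^ 2 / (G.uC c) ^ 2 : ℝ) : EReal) ∈
        {x : EReal | ∃ c' : G.Cycle, G.Commensurate c' ∧
          x = ((π ^ 2 / (G.uC c') ^ 2 : ℝ) : EReal)} := ⟨c, hcomm, rfl⟩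
    have hle : G.lamThreshold ≤ ((π ^ 2 / (G.uC c) ^ 2 : ℝ) : EReal) := sInf_le hmem
    have hfin : G.lamThreshold ≤ (lam : EReal) :=
      le_trans hle (EReal.coe_le_coe_iff.2 hbound)
    exact absurd hlam (not_lt.2 hfin)
end
end

section
/- Let G be a finite metric graph and let λ > 0. If the subgraph G_λ contains no cycle (i.e., G_λ is a forest), then λ is not a resonance of G; that is, R(G, λ) = {0}. -/
open Real Set Filter Topology

noncomputable section

-- ## Auxiliary ODE lemmas

section ODEAux

variable {ω : ℝ} {f : ℝ → ℂ}


lemma hasDerivAt_cos_omega (ω x : ℝ) :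
    HasDerivAt (fun y : ℝ => ((Real.cos (ω * y) : ℝ) : ℂ)) ((-Real.sin (ω * x) * ω : ℝ) : ℂ) x := by
  have h1 : HasDerivAt (fun y : ℝ => ω * y) ω x := by
    simpa using (hasDerivAt_id x).const_mul ω
  exact (((Real.hasDerivAt_cos (ω * x)).comp x h1).ofReal_comp).congr_deriv (by push_cast; ring)

lemma hasDerivAt_sin_omega (ω x : ℝ) :
    HasDerivAt (fun y : ℝ => ((Real.sin (ω * y) : ℝ) : ℂ)) ((Real.cos (ω * x) * ω : ℝ) : ℂ) x := by
  have h1 : HasDerivAt (fun y : ℝ => ω * y) ω x := by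
    simpa using (hasDerivAt_id x).const_mul ω
  exact (((Real.hasDerivAt_sin (ω * x)).comp x h1).ofReal_comp).congr_deriv (by push_cast; ring)

lemma wronski (hf : ContDiff ℝ 2 f)
    (hode : ∀ x, deriv (deriv f) x = -((ω : ℂ) ^ 2) * f x) (x : ℝ) :
    ((ω : ℂ) * (f x * ((Real.cos (ω * x) : ℝ) : ℂ)) - deriv f x * ((Real.sin (ω * x) : ℝ) : ℂ)
      = (ω : ℂ) * f 0) ∧
    (deriv f x * ((Real.cos (ω * x) : ℝ) : ℂ) + (ω : ℂ) * (f x * ((Real.sin (ω * x) : ℝ) : ℂ))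
      = deriv f 0) := by
  have hdf : Differentiable ℝ f := hf.differentiable (by norm_num)
  have hdf' : Differentiable ℝ (deriv f) := by
    have := (contDiff_succ_iff_deriv (n := 1)).mp (by exact_mod_cast hf)
    exact this.2.2.differentiable (by norm_num)
  have key : ∀ (g : ℝ → ℂ), (∀ y, HasDerivAt g 0 y) → ∀ y, g y = g 0 := by
    intro g hg y
    exact is_const_of_deriv_eq_zero (fun z => (hg z).differentiableAt) (fun z => (hg z).deriv) y 0
  constructor
  · have hg : ∀ y, HasDerivAt (fun y => (ω : ℂ) * (f y * ((Real.cos (ω * y) : ℝ) : ℂ))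
        - deriv f y * ((Real.sin (ω * y) : ℝ) : ℂ)) 0 y := by
      intro y
      have h := ((((hdf y).hasDerivAt.mul (hasDerivAt_cos_omega ω y)).const_mul (ω : ℂ)).sub
        (((hdf' y).hasDerivAt.mul (hasDerivAt_sin_omega ω y))))
      refine h.congr_deriv ?_
      rw [hode]
      push_cast
      ring
    have := key _ hg x
    simpa using this
  · have hg : ∀ y, HasDerivAt (fun y => deriv f y * ((Real.cos (ω * y) : ℝ) : ℂ)
        + (ω : ℂ) * (f y * ((Real.sin (ω * y) : ℝ) : ℂ))) 0 y := by
      intro y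
      have h := (((hdf' y).hasDerivAt.mul (hasDerivAt_cos_omega ω y)).add
        (((hdf y).hasDerivAt.mul (hasDerivAt_sin_omega ω y)).const_mul (ω : ℂ)))
      refine h.congr_deriv ?_
      rw [hode]
      push_cast
      ring
    have := key _ hg x
    simpa using this

lemma sol_vanish {ω : ℝ} {f : ℝ → ℂ} (hω : 0 < ω) (hf : ContDiff ℝ 2 f)
    (hode : ∀ x, deriv (deriv f) x = -((ω : ℂ) ^ 2) * f x) (hf0 : f 0 = 0)
    (hd0 : deriv f 0 = 0) (x : ℝ) : f x = 0 := by
  have e1 := (wronski hf hode x).1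
  have e2 := (wronski hf hode x).2
  rw [hf0, mul_zero] at e1
  rw [hd0] at e2
  have s : ((Real.sin (ω * x) : ℝ) : ℂ) ^ 2 + ((Real.cos (ω * x) : ℝ) : ℂ) ^ 2 = 1 := by
    exact_mod_cast congrArg Complex.ofReal (Real.sin_sq_add_cos_sq (ω * x))
  have hmain : (ω : ℂ) * f x = 0 := by
    linear_combination ((Real.cos (ω * x) : ℝ) : ℂ) * e1 + ((Real.sin (ω * x) : ℝ) : ℂ) * e2
      - (ω : ℂ) * f x * s
  rcases mul_eq_zero.mp hmain with h | h
  · exact absurd h (by exact_mod_cast hω.ne')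
  · exact h

lemma sol_deriv_L {ω : ℝ} {f : ℝ → ℂ} (hω : 0 < ω) (hf : ContDiff ℝ 2 f)
    (hode : ∀ x, deriv (deriv f) x = -((ω : ℂ) ^ 2) * f x) (hf0 : f 0 = 0)
    {L : ℝ} (hfL : f L = 0) :
    deriv f L = ((Real.cos (ω * L) : ℝ) : ℂ) * deriv f 0 ∧
      (Real.sin (ω * L) ≠ 0 → deriv f 0 = 0) := by
  have e1 := (wronski hf hode L).1
  have e2 := (wronski hf hode L).2
  rw [hf0, hfL] at e1
  rw [hfL] at e2
  simp only [mul_zero, zero_mul, sub_zero, zero_sub, add_zero, neg_eq_zero] at e1 e2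
  by_cases hs : Real.sin (ω * L) = 0
  · have hc : Real.cos (ω * L) ^ 2 = 1 := by
      have := Real.sin_sq_add_cos_sq (ω * L)
      nlinarith
    have hc' : ((Real.cos (ω * L) : ℝ) : ℂ) ^ 2 = 1 := by exact_mod_cast hc
    constructor
    · linear_combination ((Real.cos (ω * L) : ℝ) : ℂ) * e2 - deriv f L * hc'
    · intro h
      exact absurd hs h
  · have hL0 : deriv f L = 0 := by
      rcases mul_eq_zero.mp e1 with h | h
      · exact h
      · exact absurd h (by exact_mod_cast hs)
    have h00 : deriv f 0 = 0 := by rw [← e2, hL0, zero_mul]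
    refine ⟨?_, fun _ => h00⟩
    rw [hL0, h00, mul_zero]


lemma cos_ne_zero_of_sin_eq_zero' {x : ℝ} (h : Real.sin x = 0) : Real.cos x ≠ 0 := by
  intro hc
  nlinarith [Real.sin_sq_add_cos_sq x]

end ODEAux

-- ## Auxiliary combinatorial lemmas

namespace MetricGraph

variable (G : MetricGraph)



lemma exists_dir {G : MetricGraph} {e : G.E} {v : G.V} (h : G.o e = v ∨ G.t e = v) :
    ∃ d, G.esrc e d = v := by
  rcases h with h | h
  · exact ⟨true, h⟩
  · exact ⟨false, h⟩

lemma pair_eq (e : G.E) (d : Bool) :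
    (G.o e = G.esrc e d ∧ G.t e = G.edst e d) ∨
    (G.o e = G.edst e d ∧ G.t e = G.esrc e d) := by
  cases d
  · exact Or.inr ⟨rfl, rfl⟩
  · exact Or.inl ⟨rfl, rfl⟩

lemma esrc_mem (e : G.E) (d : Bool) : G.esrc e d = G.o e ∨ G.esrc e d = G.t e := by
  cases d
  · exact Or.inr rfl
  · exact Or.inl rfl

lemma edst_mem (e : G.E) (d : Bool) : G.edst e d = G.o e ∨ G.edst e d = G.t e := by
  cases d
  · exact Or.inl rfl
  · exact Or.inr rfl

lemma esrc_ne_edst {G : MetricGraph} {e : G.E} (h : G.o e ≠ G.t e) (d : Bool) :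
    G.esrc e d ≠ G.edst e d := by
  cases d
  · exact fun hh => h hh.symm
  · exact h

/-- A vertex-injective walk through edges of `S`. -/
structure Walk (S : Set G.E) where
  k : ℕ
  vtx : ℕ → G.V
  edge : ℕ → G.E
  dir : ℕ → Bool
  inj : ∀ i j, i ≤ k → j ≤ k → vtx i = vtx j → i = j
  mem : ∀ i, i < k → edge i ∈ S
  src : ∀ i, i < k → G.esrc (edge i) (dir i) = vtx i
  dst : ∀ i, i < k → G.edst (edge i) (dir i) = vtx (i + 1)

namespace Walk

variable {G} {S : Set G.E} (W : G.Walk S)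

lemma edge_inj {i j : ℕ} (hi : i < W.k) (hj : j < W.k) (h : W.edge i = W.edge j) :
    i = j := by
  by_cases hd : W.dir i = W.dir j
  · have : W.vtx i = W.vtx j := by
      rw [← W.src i hi, ← W.src j hj, h, hd]
    exact W.inj i j hi.le hj.le this
  · have hd' : W.dir i = !(W.dir j) := by
      cases hdi : W.dir i <;> cases hdj : W.dir j <;> simp_all
    have h1 : W.vtx i = W.vtx (j + 1) := by
      rw [← W.src i hi, ← W.dst j hj, h, hd', G.esrc_not]
    have h2 : W.vtx (i + 1) = W.vtx j := by
      rw [← W.dst i hi, ← W.src j hj, h]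
      cases hdj : W.dir j <;> simp_all [esrc, edst]
    have e1 := W.inj i (j+1) hi.le hj h1
    have e2 := W.inj (i+1) j hi hj.le h2
    omega

end Walk

/-- Build a cycle from a walk plus a chord from the last vertex back to vertex `j`. -/
lemma cycle_of_chord {G : MetricGraph} {S : Set G.E} (W : G.Walk S) {j : ℕ} (hj : j < W.k)
    {e' : G.E} {d' : Bool} (he'S : e' ∈ S)
    (hsrc : G.esrc e' d' = W.vtx W.k) (hdst : G.edst e' d' = W.vtx j)
    (hne : ∀ i, i < W.k → e' ≠ W.edge i) :
    ∃ c : G.Cycle, c.inSub S := by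
  set k := W.k with hk
  set n := k - j + 1 with hn
  have hn2 : 2 ≤ n := by omega
  have npos : 0 < n := by omega
  refine ⟨⟨n, npos,
    fun i => if i.val < n - 1 then W.edge (j + i.val) else e',
    fun i => if i.val < n - 1 then W.dir (j + i.val) else d', ?_, ?_, ?_⟩, ?_⟩
  · -- edge_inj
    intro i₁ i₂ h
    dsimp only at h
    by_cases h1 : i₁.val < n - 1 <;> by_cases h2 : i₂.val < n - 1
    · rw [if_pos h1, if_pos h2] at h
      have := W.edge_inj (i := j + i₁.val) (j := j + i₂.val) (by omega) (by omega) h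
      exact Fin.ext (by omega)
    · rw [if_pos h1, if_neg h2] at h
      exact absurd h.symm (hne _ (by omega))
    · rw [if_neg h1, if_pos h2] at h
      exact absurd h (hne _ (by omega))
    · have := i₁.isLt; have := i₂.isLt
      exact Fin.ext (by omega)
  · -- vert_inj
    intro i₁ i₂ h
    dsimp only at h
    by_cases h1 : i₁.val < n - 1 <;> by_cases h2 : i₂.val < n - 1
    · rw [if_pos h1, if_pos h1, if_pos h2, if_pos h2, W.src _ (by omega), W.src _ (by omega)] at h
      have := W.inj _ _ (by omega) (by omega) h
      exact Fin.ext (by omega)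
    · rw [if_pos h1, if_pos h1, if_neg h2, if_neg h2, W.src _ (by omega), hsrc] at h
      have := W.inj _ _ (by omega) (le_refl k) h
      exact absurd this (by omega)
    · rw [if_neg h1, if_neg h1, if_pos h2, if_pos h2, W.src _ (by omega), hsrc] at h
      have := W.inj _ _ (le_refl k) (by omega) h
      exact absurd this (by omega)
    · have := i₁.isLt; have := i₂.isLt
      exact Fin.ext (by omega)
  · -- chain
    intro i
    dsimp only
    by_cases hi : i.val < n - 1
    · have hmod : (i.val + 1) % n = i.val + 1 := Nat.mod_eq_of_lt (by omega)
      rw [if_pos hi, if_pos hi]; simp only [hmod]; rw [W.dst _ (by omega)]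
      by_cases hi2 : i.val + 1 < n - 1
      · rw [if_pos hi2, if_pos hi2, W.src _ (by omega)]
        exact congrArg W.vtx (by omega)
      · rw [if_neg hi2, if_neg hi2, hsrc]
        exact congrArg W.vtx (by omega)
    · have hieq : i.val = n - 1 := by have := i.isLt; omega
      have hmod : (i.val + 1) % n = 0 := by
        rw [hieq, Nat.sub_add_cancel (by omega : 1 ≤ n), Nat.mod_self]
      rw [if_neg hi, if_neg hi]; simp only [hmod]; rw [hdst, if_pos (by omega : 0 < n - 1),
        if_pos (by omega : 0 < n - 1), W.src _ (by omega)]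
      exact congrArg W.vtx (by omega)
  · -- inSub
    intro i
    dsimp only [Cycle.inSub]
    by_cases hi : i.val < n - 1
    · rw [if_pos hi]
      exact W.mem _ (by omega)
    · rw [if_neg hi]
      exact he'S

/-- A loop gives a cycle. -/
lemma cycle_of_loop {G : MetricGraph} {S : Set G.E} {e : G.E} (he : e ∈ S)
    (hl : G.o e = G.t e) : ∃ c : G.Cycle, c.inSub S := by
  refine ⟨⟨1, one_pos, fun _ => e, fun _ => true,
    Function.injective_of_subsingleton _, Function.injective_of_subsingleton _, ?_⟩,
    fun _ => he⟩
  intro i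
  simp [esrc, edst, hl]

/-- Min-degree-two (companion-edge) condition implies existence of a cycle. -/
theorem exists_cycle {G : MetricGraph} {S : Set G.E} (hne : S.Nonempty)
    (hdeg : ∀ v e₀, e₀ ∈ S → G.o e₀ ≠ G.t e₀ → (G.o e₀ = v ∨ G.t e₀ = v) →
      ∃ e₁, e₁ ∈ S ∧ e₁ ≠ e₀ ∧ (G.o e₁ = v ∨ G.t e₁ = v)) :
    ∃ c : G.Cycle, c.inSub S := by
  by_cases hloop : ∃ e ∈ S, G.o e = G.t e
  · obtain ⟨e, he, hl⟩ := hloop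
    exact cycle_of_loop he hl
  push_neg at hloop
  obtain ⟨e₀, he₀⟩ := hne
  have hnl₀ : G.o e₀ ≠ G.t e₀ := hloop e₀ he₀
  -- the trivial walk of length 1
  obtain ⟨W₀, hW₀k⟩ : ∃ W : G.Walk S, W.k = 1 := by
    refine ⟨⟨1, fun i => if i = 0 then G.o e₀ else G.t e₀, fun _ => e₀, fun _ => true,
      ?_, fun _ _ => he₀, ?_, ?_⟩, rfl⟩
    · intro i j hi hj h
      interval_cases i <;> interval_cases j <;>
        simp only [if_pos rfl, if_neg (by omega : ¬ (1 : ℕ) = 0)] at h <;>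
        first
          | rfl
          | exact absurd h hnl₀
          | exact absurd h.symm hnl₀
    · intro i hi
      interval_cases i
      simp [esrc]
    · intro i hi
      interval_cases i
      simp [edst, if_neg (by omega : ¬ (1 : ℕ) = 0)]
  -- maximal walk
  set KK : Set ℕ := {m | ∃ W : G.Walk S, W.k = m} with hKK
  have hbdd : ∀ m ∈ KK, m ≤ Fintype.card G.V := by
    rintro m ⟨W, rfl⟩
    have : W.k + 1 ≤ Fintype.card G.V := by
      have hinj : Function.Injective (fun i : Fin (W.k + 1) => W.vtx i.val) := by
        intro i j h
        exact Fin.ext (W.inj i.val j.val (by omega) (by omega) h)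
      simpa using Fintype.card_le_of_injective _ hinj
    omega
  have h1K : 1 ∈ KK := ⟨W₀, hW₀k⟩
  have hmem : sSup KK ∈ KK := Nat.sSup_mem ⟨1, h1K⟩ ⟨_, hbdd⟩
  obtain ⟨W, hWk⟩ := hmem
  have hmax : ∀ W' : G.Walk S, W'.k ≤ W.k := by
    intro W'
    rw [hWk]
    exact le_csSup ⟨_, hbdd⟩ ⟨W', rfl⟩
  have hk1 : 1 ≤ W.k := by
    rw [hWk]
    exact le_csSup ⟨_, hbdd⟩ h1K
  set k := W.k with hk
  set u := W.vtx k with hu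
  set eL := W.edge (k - 1) with heL
  have heLk : k - 1 < k := by omega
  have heLS : eL ∈ S := W.mem _ heLk
  have heLd : G.edst eL (W.dir (k-1)) = u := by
    rw [W.dst _ heLk, hu]
    congr 1
    omega
  have heLinc : G.o eL = u ∨ G.t eL = u := by
    rcases G.edst_mem eL (W.dir (k-1)) with h | h
    · exact Or.inl (h ▸ heLd)
    · exact Or.inr (h ▸ heLd)
  obtain ⟨e₁, he₁S, he₁ne, he₁inc⟩ := hdeg u eL heLS (hloop eL heLS) heLinc
  obtain ⟨d', hd'⟩ := exists_dir he₁inc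
  set w := G.edst e₁ d' with hw
  have hwu : w ≠ u := fun hh =>
    esrc_ne_edst (hloop e₁ he₁S) d' (hd'.trans (hh.symm.trans hw))
  by_cases hcase : ∃ j, j ≤ k ∧ W.vtx j = w
  · obtain ⟨j, hjk, hjw⟩ := hcase
    have hjlt : j < k := by
      rcases Nat.lt_or_ge j k with h | h
      · exact h
      · have : j = k := by omega
        subst this
        exact absurd hjw.symm hwu
    have hne' : ∀ i, i < k → e₁ ≠ W.edge i := by
      intro i hik heq
      have hou : G.o (W.edge i) = W.vtx i ∨ G.o (W.edge i) = W.vtx (i+1) := by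
        rcases G.pair_eq (W.edge i) (W.dir i) with ⟨ho, _⟩ | ⟨ho, _⟩
        · exact Or.inl (by rw [ho, W.src _ hik])
        · exact Or.inr (by rw [ho, W.dst _ hik])
      have htu : G.t (W.edge i) = W.vtx i ∨ G.t (W.edge i) = W.vtx (i+1) := by
        rcases G.pair_eq (W.edge i) (W.dir i) with ⟨_, ht⟩ | ⟨_, ht⟩
        · exact Or.inr (by rw [ht, W.dst _ hik])
        · exact Or.inl (by rw [ht, W.src _ hik])
      have hmem1 : u = W.vtx i ∨ u = W.vtx (i + 1) := by
        rcases G.esrc_mem e₁ d' with h | h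
        · rcases hou with h' | h' <;> [left; right] <;>
            (rw [← hd', heq]; rw [heq] at h; rw [h]; exact h')
        · rcases htu with h' | h' <;> [left; right] <;>
            (rw [← hd', heq]; rw [heq] at h; rw [h]; exact h')
      rcases hmem1 with h | h
      · have := W.inj k i (le_refl _) hik.le h
        omega
      · have h2 := W.inj k (i+1) (le_refl _) hik h
        have h3 : i = k - 1 := by omega
        exact he₁ne (by rw [heq, h3])
    exact cycle_of_chord W hjlt he₁S hd' hjw.symm hne'
  · push_neg at hcase
    -- extend the walk, contradicting maximality
    obtain ⟨W', hW'⟩ : ∃ W' : G.Walk S, W'.k = k + 1 := by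
      refine ⟨⟨k + 1, fun i => if i ≤ k then W.vtx i else w,
        fun i => if i < k then W.edge i else e₁,
        fun i => if i < k then W.dir i else d', ?_, ?_, ?_, ?_⟩, rfl⟩
      · intro i j hi hj h
        by_cases h1 : i ≤ k <;> by_cases h2 : j ≤ k
        · rw [if_pos h1, if_pos h2] at h
          exact W.inj i j h1 h2 h
        · rw [if_pos h1, if_neg h2] at h
          exact absurd h (hcase i h1)
        · rw [if_neg h1, if_pos h2] at h
          exact absurd h.symm (hcase j h2)
        · omega
      · intro i hi
        by_cases h1 : i < k
        · rw [if_pos h1]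
          exact W.mem i h1
        · rw [if_neg h1]
          exact he₁S
      · intro i hi
        by_cases h1 : i < k
        · rw [if_pos h1, if_pos h1, if_pos (by omega : i ≤ k)]
          exact W.src i h1
        · have h2 : i = k := by omega
          subst h2
          rw [if_neg h1, if_neg h1, if_pos (le_refl k)]
          exact hd'
      · intro i hi
        by_cases h1 : i < k
        · rw [if_pos h1, if_pos h1, if_pos (by omega : i + 1 ≤ k)]
          exact W.dst i h1
        · have h2 : i = k := by omega
          subst h2
          rw [if_neg h1, if_neg h1, if_neg (by omega : ¬ k + 1 ≤ k)]
    have := hmax W'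
    omega



lemma sin_lam {lam : ℝ} (hlam : 0 < lam) {e : G.E} (he : e ∈ G.lamEdges lam) :
    Real.sin (Real.sqrt lam * G.L e) = 0 := by
  obtain ⟨k, hk, hL⟩ := he
  have hω : Real.sqrt lam ≠ 0 := (Real.sqrt_pos.2 hlam).ne'
  have hh : Real.sqrt lam * G.L e = k * π := by
    rw [hL]
    field_simp
  rw [hh, Real.sin_nat_mul_pi]

lemma mem_lamEdges_of_sin {lam : ℝ} (hlam : 0 < lam) {e : G.E}
    (hs : Real.sin (Real.sqrt lam * G.L e) = 0) : e ∈ G.lamEdges lam := by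
  obtain ⟨n, hn⟩ := Real.sin_eq_zero_iff.mp hs
  have hω : 0 < Real.sqrt lam := Real.sqrt_pos.2 hlam
  have hpos : 0 < (n : ℝ) * π := hn ▸ (mul_pos hω (G.L_pos e))
  have hn0 : 0 < n := by
    by_contra h
    push_neg at h
    have hn' : (n : ℝ) ≤ 0 := by exact_mod_cast h
    nlinarith [Real.pi_pos]
  refine ⟨n.toNat, by omega, ?_⟩
  have hcast : (n.toNat : ℝ) = (n : ℝ) := by exact_mod_cast Int.toNat_of_nonneg hn0.le
  rw [hcast]
  field_simp
  linear_combination -hn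

end MetricGraph

/-- if the subgraph `G_λ` contains no cycle, then `λ` is not a
resonance of `G`, i.e. `R(G, λ) = {0}`. -/
theorem statement_9 (G : MetricGraph) (lam : ℝ) (hlam : 0 < lam)
    (hforest : ¬ ∃ c : G.Cycle, c.inSub (G.lamEdges lam)) :
    G.resSet lam = {0} ∧ ¬ G.IsResonance lam := by
  have hω : 0 < Real.sqrt lam := Real.sqrt_pos.2 hlam
  set ω := Real.sqrt lam with hωdef
  have hμ : ((ω : ℂ)) ^ 2 = ((lam : ℝ) : ℂ) := by
    rw [hωdef]
    norm_cast
    exact Real.sq_sqrt hlam.le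
  have h0 : (0 : G.E → ℝ → ℂ) ∈ G.resSet lam := by
    have hd0 : deriv (0 : ℝ → ℂ) = 0 := funext fun y => deriv_const y 0
    refine ⟨⟨⟨fun e => ?_, fun e x => ?_,
      ⟨fun _ _ _ => rfl, fun _ _ _ => rfl, fun _ _ _ => rfl⟩⟩, fun v => ?_⟩, fun e => ⟨rfl, rfl⟩⟩
    · exact contDiff_const
    · simp [hd0]
    · simp [MetricGraph.normDer, hd0]
  have key : ∀ f ∈ G.resSet lam, f = 0 := by
    rintro f ⟨⟨⟨hsm, hode, -⟩, hkir⟩, hvan⟩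
    have hode' : ∀ e, ∀ x : ℝ, deriv (deriv (f e)) x = -((ω : ℂ) ^ 2) * f e x := by
      intro e x
      rw [hode e x, hμ]
    have hD1 : ∀ e, deriv (f e) (G.L e) = ((Real.cos (ω * G.L e) : ℝ) : ℂ) * deriv (f e) 0 :=
      fun e => (sol_deriv_L hω (hsm e) (hode' e) (hvan e).1 (hvan e).2).1
    have hS2 : ∀ e, Real.sin (ω * G.L e) ≠ 0 → deriv (f e) 0 = 0 :=
      fun e => (sol_deriv_L hω (hsm e) (hode' e) (hvan e).1 (hvan e).2).2
    have hSup : ∀ e, deriv (f e) 0 ≠ 0 → e ∈ G.lamEdges lam := by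
      intro e hc
      by_contra he
      exact hc (hS2 e fun hs => he (G.mem_lamEdges_of_sin hlam hs))
    have hall : ∀ e, deriv (f e) 0 = 0 := by
      by_contra hex
      push_neg at hex
      set S : Set G.E := {e | deriv (f e) 0 ≠ 0} with hSdef
      have hne : S.Nonempty := hex
      have hdeg : ∀ v e₀, e₀ ∈ S → G.o e₀ ≠ G.t e₀ → (G.o e₀ = v ∨ G.t e₀ = v) →
          ∃ e₁, e₁ ∈ S ∧ e₁ ≠ e₀ ∧ (G.o e₁ = v ∨ G.t e₁ = v) := by
        intro v e₀ he₀ hnl hinc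
        by_contra hcomp
        push_neg at hcomp
        have hkv := hkir v
        unfold MetricGraph.normDer at hkv
        have hzero_other : ∀ e, e ≠ e₀ → (G.o e = v ∨ G.t e = v) → deriv (f e) 0 = 0 := by
          intro e hne0 hincv
          by_contra hce
          rcases hcomp e hce hne0 with ⟨h1, h2⟩
          rcases hincv with h | h
          · exact h1 h
          · exact h2 h
        rcases hinc with ho | ht
        · have htn : G.t e₀ ≠ v := fun h => hnl (ho.trans h.symm)
          have hsum1 : ∑ e ∈ Finset.univ.filter (fun e => G.t e = v),
              deriv (f e) (G.L e) = 0 := by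
            refine Finset.sum_eq_zero ?_
            intro e he
            have hev := (Finset.mem_filter.mp he).2
            have hne0 : e ≠ e₀ := fun h => htn (h ▸ hev)
            rw [hD1 e, hzero_other e hne0 (Or.inr hev), mul_zero]
          have hsum2 : ∑ e ∈ Finset.univ.filter (fun e => G.o e = v),
              deriv (f e) 0 = deriv (f e₀) 0 := by
            refine Finset.sum_eq_single_of_mem e₀
              (Finset.mem_filter.mpr ⟨Finset.mem_univ _, ho⟩) ?_
            intro e he hne0
            exact hzero_other e hne0 (Or.inl (Finset.mem_filter.mp he).2)
          rw [hsum1, hsum2, zero_sub, neg_eq_zero] at hkv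
          exact he₀ hkv
        · have hon : G.o e₀ ≠ v := fun h => hnl (h.trans ht.symm)
          have hsum2 : ∑ e ∈ Finset.univ.filter (fun e => G.o e = v),
              deriv (f e) 0 = 0 := by
            refine Finset.sum_eq_zero ?_
            intro e he
            have hev := (Finset.mem_filter.mp he).2
            have hne0 : e ≠ e₀ := fun h => hon (h ▸ hev)
            exact hzero_other e hne0 (Or.inl hev)
          have hsum1 : ∑ e ∈ Finset.univ.filter (fun e => G.t e = v),
              deriv (f e) (G.L e) = deriv (f e₀) (G.L e₀) := by
            refine Finset.sum_eq_single_of_mem e₀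
              (Finset.mem_filter.mpr ⟨Finset.mem_univ _, ht⟩) ?_
            intro e he hne0
            rw [hD1 e, hzero_other e hne0 (Or.inr (Finset.mem_filter.mp he).2), mul_zero]
          rw [hsum1, hsum2, sub_zero, hD1 e₀] at hkv
          have hcos : Real.cos (ω * G.L e₀) ≠ 0 :=
            cos_ne_zero_of_sin_eq_zero' (G.sin_lam hlam (hSup e₀ he₀))
          rcases mul_eq_zero.mp hkv with h | h
          · exact hcos (by exact_mod_cast h)
          · exact he₀ h
      obtain ⟨cyc, hcyc⟩ := MetricGraph.exists_cycle hne hdeg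
      exact hforest ⟨cyc, fun i => hSup _ (hcyc i)⟩
    funext e x
    show f e x = 0
    exact sol_vanish hω (hsm e) (hode' e) (hvan e).1 (hall e) x
  have heq : G.resSet lam = {0} := Set.eq_singleton_iff_unique_mem.mpr ⟨h0, key⟩
  exact ⟨heq, fun h => h heq⟩
end
end

section
/- Let G be a finite metric graph and let B be a set of vertices of G containing all boundary vertices and all proper core vertices of G. Let λ ∈ ℝ and let f ∈ ker(−Δ_G − λ) satisfy f(v) = 0 for every v ∈ B. Then f(v) = 0 for every vertex v of G. -/
open Real Set Filter Topology

noncomputable section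

lemma ode_zero (mu : ℂ) (f : ℝ → ℂ) (hf : ContDiff ℝ 2 f)
    (hode : ∀ x, deriv (deriv f) x = -mu * f x) (x0 : ℝ)
    (h0 : f x0 = 0) (h1 : deriv f x0 = 0) : ∀ x, f x = 0 := by
  classical
  set L : ℂ × ℂ →L[ℂ] ℂ × ℂ :=
    (ContinuousLinearMap.snd ℂ ℂ ℂ).prod ((-mu) • ContinuousLinearMap.fst ℂ ℂ ℂ) with hL
  have hlip : ∀ t : ℝ, LipschitzWith ‖L‖₊ (fun p : ℂ × ℂ => L p) := fun _ => L.lipschitz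
  have h2f : ContDiff ℝ ((1 : ℕ∞) + 1) f := by norm_num; exact hf
  have hdf : Differentiable ℝ f := hf.differentiable (by norm_num)
  have hdf' : Differentiable ℝ (deriv f) := by
    have := (contDiff_succ_iff_deriv.mp h2f).2.2
    exact this.differentiable (by norm_num)
  set y : ℝ → ℂ × ℂ := fun t => (f t, deriv f t) with hy
  have hyd : ∀ t : ℝ, HasDerivAt y (L (y t)) t := by
    intro t
    have h1' : HasDerivAt f (deriv f t) t := (hdf t).hasDerivAt
    have h2' : HasDerivAt (deriv f) (deriv (deriv f) t) t := (hdf' t).hasDerivAt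
    rw [hode t] at h2'
    simpa [hL, y] using h1'.prodMk h2'
  have hzd : ∀ t : ℝ, HasDerivAt (fun _ : ℝ => ((0 : ℂ), (0 : ℂ))) (L 0) t := by
    intro t; simpa using hasDerivAt_const t ((0 : ℂ), (0 : ℂ))
  intro x
  have key : y x = 0 := by
    have hx : x ∈ Ioo (min x x0 - 1) (max x x0 + 1) := by
      constructor
      · have := min_le_left x x0; linarith
      · have := le_max_left x x0; linarith
    have hx0 : x0 ∈ Ioo (min x x0 - 1) (max x x0 + 1) := by
      constructor
      · have := min_le_right x x0; linarith
      · have := le_max_right x x0; linarith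
    have := ODE_solution_unique_of_mem_Ioo (s := fun _ => (univ : Set (ℂ × ℂ)))
      (v := fun _ p => L p) (fun t _ => (L.lipschitz).lipschitzOnWith) hx0
      (fun t _ => ⟨hyd t, trivial⟩) (fun t _ => ⟨hzd t, trivial⟩)
      (by simp [y, h0, h1])
    have := this hx
    exact this
  have : f x = (y x).1 := rfl
  rw [this, key]; rfl

/-- Lemma `lem:billig`: if `B` contains all boundary vertices and
all proper core vertices of `G`, `λ ∈ ℝ`, and `f ∈ ker(-Δ_G - λ)` vanishes at every
vertex in `B`, then `f` vanishes at every vertex of `G`. -/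
theorem statement_12 (G : MetricGraph) (B : Set G.V)
    (hbd : ∀ v, G.IsBoundaryVertex v → v ∈ B)
    (hcore : ∀ v, G.IsProperCoreVertex v → v ∈ B)
    (lam : ℝ) (f : G.E → ℝ → ℂ) (hf : f ∈ G.kerSet lam)
    (hzero : ∀ e, (G.o e ∈ B → f e 0 = 0) ∧ (G.t e ∈ B → f e (G.L e) = 0)) :
    ∀ e, f e 0 = 0 ∧ f e (G.L e) = 0 := by
  classical
  obtain ⟨⟨hsm, hode, hc1, hc2, hc3⟩, hkirch⟩ := hf
  set Z : Set G.E := {e | ∀ x, f e x = 0} with hZdef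
  have hderZ : ∀ e ∈ Z, ∀ x, deriv (f e) x = 0 := by
    intro e he x
    have h : f e = fun _ => 0 := funext he
    rw [h]; simp
  have hkey : Zᶜ ⊆ G.coreEdges := by
    apply Set.subset_sUnion_of_mem
    intro v hv
    have hv' : {e | e ∈ Zᶜ ∧ G.o e = v}.ncard + {e | e ∈ Zᶜ ∧ G.t e = v}.ncard = 1 := hv
    rcases Nat.add_eq_one_iff.mp hv' with ⟨h0, h1⟩ | ⟨h1, h0⟩
    · -- {e ∈ Zᶜ, o e = v} empty, {e ∈ Zᶜ, t e = v} = {e0}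
      obtain ⟨e0, he0⟩ := Set.ncard_eq_one.mp h1
      rw [Set.ncard_eq_zero (Set.toFinite _)] at h0
      have he0m : e0 ∈ Zᶜ ∧ G.t e0 = v := by
        have : e0 ∈ ({e0} : Set G.E) := rfl
        rw [← he0] at this; exact this
      obtain ⟨he0Z, ht0⟩ := he0m
      have hallo : ∀ e', G.o e' = v → e' ∈ Z := by
        intro e' h'
        by_contra hn
        have : e' ∈ {e | e ∈ Zᶜ ∧ G.o e = v} := ⟨hn, h'⟩
        rw [h0] at this; exact this
      have hallt : ∀ e', G.t e' = v → e' ≠ e0 → e' ∈ Z := by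
        intro e' h' hne
        by_contra hn
        have : e' ∈ {e | e ∈ Zᶜ ∧ G.t e = v} := ⟨hn, h'⟩
        rw [he0] at this; exact hne this
      have hval : f e0 (G.L e0) = 0 := by
        by_cases hvB : v ∈ B
        · exact (hzero e0).2 (ht0 ▸ hvB)
        · by_cases hO : ∃ e', G.o e' = v
          · obtain ⟨e', he'⟩ := hO
            have hz := hallo e' he'
            have heq := hc2 e' e0 (by rw [he', ht0])
            rw [← heq]; exact hz 0
          · push_neg at hO
            have hOe : {e | G.o e = v} = ∅ := by
              ext e'; simp [hO e']
            have hpos : 0 < {e | G.t e = v}.ncard := by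
              rw [Set.ncard_pos (Set.toFinite _)]
              exact ⟨e0, ht0⟩
            have hdeg : G.degree v ≠ 1 := fun h => hvB (hbd v h)
            have hdeg' : {e | G.o e = v}.ncard + {e | G.t e = v}.ncard ≠ 1 := hdeg
            rw [hOe, Set.ncard_empty, zero_add] at hdeg'
            have h2 : 1 < {e | G.t e = v}.ncard := by omega
            obtain ⟨e', he'm, hne⟩ := Set.exists_ne_of_one_lt_ncard h2 e0
            have hz := hallt e' he'm hne
            have heq := hc3 e0 e' (by rw [ht0, he'm])
            rw [heq]; exact hz _
      have hder : deriv (f e0) (G.L e0) = 0 := by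
        have hk := hkirch v
        unfold MetricGraph.normDer at hk
        have hA : ∑ e' ∈ Finset.univ.filter (fun e' => G.t e' = v), deriv (f e') (G.L e')
            = deriv (f e0) (G.L e0) := by
          refine Finset.sum_eq_single e0 (fun e' he' hne => ?_) (fun hne => ?_)
          · exact hderZ e' (hallt e' (Finset.mem_filter.mp he').2 hne) _
          · exact absurd (Finset.mem_filter.mpr ⟨Finset.mem_univ e0, ht0⟩) hne
        have hB : ∑ e' ∈ Finset.univ.filter (fun e' => G.o e' = v), deriv (f e') 0
            = 0 := Finset.sum_eq_zero (fun e' he' =>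
          hderZ e' (hallo e' (Finset.mem_filter.mp he').2) 0)
        rw [hA, hB, sub_zero] at hk; exact hk
      exact he0Z (ode_zero (lam : ℂ) (f e0) (hsm e0) (hode e0) (G.L e0) hval hder)
    · -- {e ∈ Zᶜ, o e = v} = {e0}, {e ∈ Zᶜ, t e = v} empty
      obtain ⟨e0, he0⟩ := Set.ncard_eq_one.mp h1
      rw [Set.ncard_eq_zero (Set.toFinite _)] at h0
      have he0m : e0 ∈ Zᶜ ∧ G.o e0 = v := by
        have : e0 ∈ ({e0} : Set G.E) := rfl
        rw [← he0] at this; exact this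
      obtain ⟨he0Z, ho0⟩ := he0m
      have hallt : ∀ e', G.t e' = v → e' ∈ Z := by
        intro e' h'
        by_contra hn
        have : e' ∈ {e | e ∈ Zᶜ ∧ G.t e = v} := ⟨hn, h'⟩
        rw [h0] at this; exact this
      have hallo : ∀ e', G.o e' = v → e' ≠ e0 → e' ∈ Z := by
        intro e' h' hne
        by_contra hn
        have : e' ∈ {e | e ∈ Zᶜ ∧ G.o e = v} := ⟨hn, h'⟩
        rw [he0] at this; exact hne this
      have hval : f e0 0 = 0 := by
        by_cases hvB : v ∈ B
        · exact (hzero e0).1 (ho0 ▸ hvB)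
        · by_cases hT : ∃ e', G.t e' = v
          · obtain ⟨e', he'⟩ := hT
            have hz := hallt e' he'
            have heq := hc2 e0 e' (by rw [ho0, he'])
            rw [heq]; exact hz _
          · push_neg at hT
            have hTe : {e | G.t e = v} = ∅ := by
              ext e'; simp [hT e']
            have hpos : 0 < {e | G.o e = v}.ncard := by
              rw [Set.ncard_pos (Set.toFinite _)]
              exact ⟨e0, ho0⟩
            have hdeg : G.degree v ≠ 1 := fun h => hvB (hbd v h)
            have hdeg' : {e | G.o e = v}.ncard + {e | G.t e = v}.ncard ≠ 1 := hdeg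
            rw [hTe, Set.ncard_empty, add_zero] at hdeg'
            have h2 : 1 < {e | G.o e = v}.ncard := by omega
            obtain ⟨e', he'm, hne⟩ := Set.exists_ne_of_one_lt_ncard h2 e0
            have hz := hallo e' he'm hne
            have heq := hc1 e0 e' (by rw [ho0, he'm])
            rw [heq]; exact hz 0
      have hder : deriv (f e0) 0 = 0 := by
        have hk := hkirch v
        unfold MetricGraph.normDer at hk
        have hA : ∑ e' ∈ Finset.univ.filter (fun e' => G.t e' = v), deriv (f e') (G.L e')
            = 0 := Finset.sum_eq_zero (fun e' he' =>
          hderZ e' (hallt e' (Finset.mem_filter.mp he').2) _)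
        have hB : ∑ e' ∈ Finset.univ.filter (fun e' => G.o e' = v), deriv (f e') 0
            = deriv (f e0) 0 := by
          refine Finset.sum_eq_single e0 (fun e' he' hne => ?_) (fun hne => ?_)
          · exact hderZ e' (hallo e' (Finset.mem_filter.mp he').2 hne) 0
          · exact absurd (Finset.mem_filter.mpr ⟨Finset.mem_univ e0, ho0⟩) hne
        rw [hA, hB, zero_sub, neg_eq_zero] at hk; exact hk
      exact he0Z (ode_zero (lam : ℂ) (f e0) (hsm e0) (hode e0) 0 hval hder)
  have hzero' : ∀ e, e ∉ G.coreEdges → ∀ x, f e x = 0 := by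
    intro e he
    by_contra h
    push_neg at h
    exact he (hkey (fun hmem => by obtain ⟨x, hx⟩ := h; exact hx (hmem x)))
  intro e
  constructor
  · by_cases h : G.o e ∈ B
    · exact (hzero e).1 h
    · have hp : ¬ G.IsProperCoreVertex (G.o e) := fun hp => h (hcore _ hp)
      unfold MetricGraph.IsProperCoreVertex at hp
      push_neg at hp
      obtain ⟨e', he'inc, he'core⟩ := hp
      have hz := hzero' e' he'core
      rcases he'inc with ho' | ht'
      · rw [hc1 e e' ho'.symm]; exact hz 0
      · rw [hc2 e e' ht'.symm]; exact hz _
  · by_cases h : G.t e ∈ B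
    · exact (hzero e).2 h
    · have hp : ¬ G.IsProperCoreVertex (G.t e) := fun hp => h (hcore _ hp)
      unfold MetricGraph.IsProperCoreVertex at hp
      push_neg at hp
      obtain ⟨e', he'inc, he'core⟩ := hp
      have hz := hzero' e' he'core
      rcases he'inc with ho' | ht'
      · rw [← hc2 e' e ho']; exact hz 0
      · rw [hc3 e e' ht'.symm]; exact hz _
end
end

section
/- Let G be the finite metric graph with two vertices v and w, one edge e₁ of length π joining v and w, and one loop e₂ of length 1 attached at w. Then λ = 4π² is a resonance of G, and G has no resonance in the interval (0, 4π²); that is, 4π² is the smallest real resonance of G. -/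
open Real Set Filter Topology

noncomputable section

/-- The metric graph of Example `ex:loop`: two vertices `v = 0` and `w = 1`, one edge
`e₁ = 0` of length `π` from `v` to `w`, and one loop `e₂ = 1` of length `1` at `w`. -/
def loopGraph : MetricGraph where
  V := Fin 2
  E := Fin 2
  o := ![0, 1]
  t := ![1, 1]
  L := ![π, 1]
  L_pos := by
    intro e
    fin_cases e <;> simp [Real.pi_pos]
  noIsolated := by
    intro v
    fin_cases v
    · exact ⟨0, Or.inl rfl⟩
    · exact ⟨1, Or.inl rfl⟩


namespace Statement16Aux

noncomputable def SS (ω x : ℝ) : ℂ := (Real.sin (ω * x) : ℂ)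
noncomputable def CC (ω x : ℝ) : ℂ := (Real.cos (ω * x) : ℂ)

lemma hS (ω x : ℝ) : HasDerivAt (SS ω) ((ω : ℂ) * CC ω x) x := by
  have h : HasDerivAt (fun x : ℝ => Real.sin (ω * x)) (Real.cos (ω * x) * ω) x :=
    (Real.hasDerivAt_sin _).comp x (by simpa using (hasDerivAt_id x).const_mul ω)
  have h2 := h.ofReal_comp
  simp [SS, CC, mul_comm, -Complex.ofReal_sin, -Complex.ofReal_cos] at h2 ⊢
  exact h2

lemma hC (ω x : ℝ) : HasDerivAt (CC ω) (-(ω : ℂ) * SS ω x) x := by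
  have h : HasDerivAt (fun x : ℝ => Real.cos (ω * x)) (-Real.sin (ω * x) * ω) x :=
    (Real.hasDerivAt_cos _).comp x (by simpa using (hasDerivAt_id x).const_mul ω)
  have h2 := h.ofReal_comp
  simp [SS, CC, mul_comm, neg_mul, -Complex.ofReal_sin, -Complex.ofReal_cos] at h2 ⊢
  exact h2

lemma key (ω : ℝ) (g : ℝ → ℂ) (hg : ContDiff ℝ 2 g)
    (hode : ∀ x, deriv (deriv g) x = -((ω:ℂ)) ^ 2 * g x) (x : ℝ) :
    (ω : ℂ) * g x = deriv g 0 * SS ω x + (ω : ℂ) * g 0 * CC ω x := by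
  have hgd : Differentiable ℝ g := hg.differentiable (by norm_num)
  have hg1 : ContDiff ℝ 1 (deriv g) := by
    have := (contDiff_succ_iff_deriv (n := 1)).mp (by exact_mod_cast hg)
    exact this.2.2
  have hg'd : Differentiable ℝ (deriv g) := hg1.differentiable (by norm_num)
  have hu : ∀ y, HasDerivAt (fun y => deriv g y * CC ω y + (ω:ℂ) * g y * SS ω y) 0 y := by
    intro y
    have h1 := (((hg'd y).hasDerivAt).mul (hC ω y)).add
      ((((hgd y).hasDerivAt).const_mul ((ω:ℂ))).mul (hS ω y))
    refine h1.congr_deriv ?_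
    rw [hode y]; ring
  have hW : ∀ y, HasDerivAt (fun y => (ω:ℂ) * g y * CC ω y - deriv g y * SS ω y) 0 y := by
    intro y
    have h1 := ((((hgd y).hasDerivAt).const_mul ((ω:ℂ))).mul (hC ω y)).sub
      (((hg'd y).hasDerivAt).mul (hS ω y))
    refine h1.congr_deriv ?_
    rw [hode y]; ring
  have hu_const : deriv g x * CC ω x + (ω:ℂ) * g x * SS ω x
      = deriv g 0 * CC ω 0 + (ω:ℂ) * g 0 * SS ω 0 :=
    is_const_of_deriv_eq_zero (fun y => (hu y).differentiableAt) (fun y => (hu y).deriv) x 0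
  have hW_const : (ω:ℂ) * g x * CC ω x - deriv g x * SS ω x
      = (ω:ℂ) * g 0 * CC ω 0 - deriv g 0 * SS ω 0 :=
    is_const_of_deriv_eq_zero (fun y => (hW y).differentiableAt) (fun y => (hW y).deriv) x 0
  have hpyth : SS ω x ^ 2 + CC ω x ^ 2 = 1 := by
    rw [SS, CC]
    exact_mod_cast congrArg (Complex.ofReal) (Real.sin_sq_add_cos_sq (ω * x))
  have h0S : SS ω 0 = 0 := by simp [SS]
  have h0C : CC ω 0 = 1 := by simp [CC]
  rw [h0S, h0C] at hu_const hW_const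
  linear_combination SS ω x * hu_const + CC ω x * hW_const - (ω:ℂ) * g x * hpyth

lemma contDiff_S (ω : ℝ) : ContDiff ℝ 2 (SS ω) :=
  Complex.ofRealCLM.contDiff.comp (Real.contDiff_sin.comp (contDiff_const.mul contDiff_id))

lemma deriv_S (ω : ℝ) : deriv (SS ω) = fun x => (ω : ℂ) * CC ω x :=
  funext fun x => (hS ω x).deriv

lemma deriv2_S (ω x : ℝ) : deriv (deriv (SS ω)) x = -((ω : ℂ)) ^ 2 * SS ω x := by
  rw [deriv_S]
  rw [(((hC ω x).const_mul ((ω:ℂ))) : HasDerivAt (fun x => (ω : ℂ) * CC ω x) _ x).deriv]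
  ring

lemma normDer0 (f : Fin 2 → ℝ → ℂ) :
    loopGraph.normDer f (0 : Fin 2) = -(deriv (f 0) 0) := by
  show ((∑ e ∈ Finset.univ.filter (fun e : Fin 2 => ![1,1] e = 0), deriv (f e) (![π,1] e)) -
      ∑ e ∈ Finset.univ.filter (fun e : Fin 2 => ![0,1] e = 0), deriv (f e) 0) = -(deriv (f 0) 0)
  erw [Finset.sum_filter, Finset.sum_filter, Fin.sum_univ_two, Fin.sum_univ_two]
  norm_num

lemma normDer1 (f : Fin 2 → ℝ → ℂ) :
    loopGraph.normDer f (1 : Fin 2) = (deriv (f 0) π + deriv (f 1) 1) - deriv (f 1) 0 := by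
  show ((∑ e ∈ Finset.univ.filter (fun e : Fin 2 => ![1,1] e = 1), deriv (f e) (![π,1] e)) -
      ∑ e ∈ Finset.univ.filter (fun e : Fin 2 => ![0,1] e = 1), deriv (f e) 0) = _
  erw [Finset.sum_filter, Finset.sum_filter, Fin.sum_univ_two, Fin.sum_univ_two]
  norm_num

lemma normDer_zero (f : Fin 2 → ℝ → ℂ)
    (h0 : loopGraph.normDer f (0 : Fin 2) = 0) (h1 : loopGraph.normDer f (1 : Fin 2) = 0) :
    ∀ v : loopGraph.V, loopGraph.normDer f v = 0 := by
  show ∀ v : Fin 2, loopGraph.normDer f v = 0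
  rw [Fin.forall_fin_two]
  exact ⟨h0, h1⟩

lemma zero_mem (lam : ℝ) : (0 : Fin 2 → ℝ → ℂ) ∈ loopGraph.resSet lam := by
  have hd : deriv (fun _ : ℝ => (0 : ℂ)) = fun _ => (0 : ℂ) := by
    funext x; simp
  refine ⟨⟨⟨fun e => contDiff_const, fun e x => by
    show deriv (deriv (fun _ : ℝ => (0 : ℂ))) x = -(lam : ℂ) * (0 : ℂ)
    rw [hd, hd]; simp,
    ⟨fun _ _ _ => rfl, fun _ _ _ => rfl, fun _ _ _ => rfl⟩⟩,
    normDer_zero 0 ?_ ?_⟩, fun e => ⟨rfl, rfl⟩⟩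
  · rw [normDer0]
    show -(deriv (fun _ : ℝ => (0:ℂ)) 0) = 0
    rw [hd]; simp
  · rw [normDer1]
    show (deriv (fun _ : ℝ => (0:ℂ)) π + deriv (fun _ : ℝ => (0:ℂ)) 1)
        - deriv (fun _ : ℝ => (0:ℂ)) 0 = 0
    rw [hd]; simp

end Statement16Aux

open Statement16Aux in
/-- for the loop graph of Example `ex:loop`, `λ = 4π²` is a
resonance, and there is no resonance in `(0, 4π²)`; that is, `4π²` is the smallest real
resonance. -/
theorem statement_16 :
    loopGraph.IsResonance (4 * π ^ 2) ∧
    ∀ lam : ℝ, 0 < lam → lam < 4 * π ^ 2 → ¬ loopGraph.IsResonance lam := by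
  have hdz : deriv (fun _ : ℝ => (0 : ℂ)) = fun _ => (0 : ℂ) := by funext x; simp
  constructor
  · -- 4π² is a resonance
    intro hcon
    set f : Fin 2 → ℝ → ℂ := ![fun _ => 0, SS (2 * π)] with hf_def
    have hf0 : f 0 = fun _ => (0 : ℂ) := rfl
    have hf1 : f 1 = SS (2 * π) := rfl
    have hd0 : deriv (f 0) = fun _ => (0 : ℂ) := by rw [hf0, hdz]
    have hd1 : deriv (f 1) = fun x => ((2 * π : ℝ) : ℂ) * CC (2 * π) x := by
      rw [hf1, deriv_S]
    have hmem : f ∈ loopGraph.resSet (4 * π ^ 2) := by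
      have hvan : ∀ e : Fin 2, f e 0 = 0 ∧ f e (loopGraph.L e) = 0 := by
        rw [Fin.forall_fin_two]
        refine ⟨⟨rfl, rfl⟩, ⟨by rw [hf1]; simp [SS], ?_⟩⟩
        rw [hf1]
        show SS (2 * π) ((1 : ℝ)) = 0
        simp [SS, Real.sin_two_pi]
      have hcd : ∀ e : Fin 2, ContDiff ℝ 2 (f e) := by
        rw [Fin.forall_fin_two]
        exact ⟨by rw [hf0]; exact contDiff_const, by rw [hf1]; exact contDiff_S _⟩
      have hode : ∀ e : Fin 2, ∀ x : ℝ,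
          deriv (deriv (f e)) x = -((4 * π ^ 2 : ℝ) : ℂ) * f e x := by
        rw [Fin.forall_fin_two]
        constructor
        · intro x
          rw [hd0, hdz, hf0]
          simp
        · intro x
          rw [hf1, deriv2_S]
          push_cast
          ring
      refine ⟨⟨⟨hcd, hode, ?_⟩, normDer_zero f ?_ ?_⟩, hvan⟩
      · refine ⟨fun e₁ e₂ _ => ?_, fun e₁ e₂ _ => ?_, fun e₁ e₂ _ => ?_⟩
        · rw [(hvan e₁).1, (hvan e₂).1]
        · rw [(hvan e₁).1, (hvan e₂).2]
        · rw [(hvan e₁).2, (hvan e₂).2]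
      · rw [normDer0, hd0]; simp
      · rw [normDer1, hd0, hd1]
        show ((0:ℂ) + ((2 * π : ℝ) : ℂ) * CC (2 * π) 1) - ((2 * π : ℝ) : ℂ) * CC (2 * π) 0 = 0
        have c1 : CC (2 * π) 1 = 1 := by simp [CC, Real.cos_two_pi]
        have c0 : CC (2 * π) 0 = 1 := by simp [CC]
        rw [c0, c1]; ring
    rw [hcon] at hmem
    have hfz : f = 0 := hmem
    have h14 : f 1 (1/4 : ℝ) = 0 := by rw [hfz]; rfl
    rw [hf1] at h14
    have hone : SS (2 * π) (1/4 : ℝ) = 1 := by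
      have h : (2 * π) * (1/4 : ℝ) = π / 2 := by ring
      rw [SS, h, Real.sin_pi_div_two]; simp
    rw [hone] at h14
    exact one_ne_zero h14
  · -- no resonance below 4π²
    intro lam hpos hlt hres
    apply hres
    set ω : ℝ := Real.sqrt lam with hω_def
    have hω0 : 0 < ω := Real.sqrt_pos.2 hpos
    have hω2 : ω ^ 2 = lam := Real.sq_sqrt hpos.le
    have hωlt : ω < 2 * π := by
      have h2 : ω ^ 2 < (2 * π) ^ 2 := by rw [hω2]; nlinarith [Real.pi_pos]
      exact lt_of_pow_lt_pow_left₀ 2 (by positivity) h2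
    have hωne : ((ω : ℝ) : ℂ) ≠ 0 := by exact_mod_cast hω0.ne'
    have hωC : ((lam : ℝ) : ℂ) = ((ω : ℂ)) ^ 2 := by
      rw [← hω2]; push_cast; ring
    ext f
    simp only [Set.mem_singleton_iff]
    constructor
    · rintro ⟨⟨⟨hcd, hode, hcont⟩, hnorm⟩, hvan⟩
      have hcd2 : ∀ e : Fin 2, ContDiff ℝ 2 (f e) := hcd
      have hvan2 : ∀ e : Fin 2, f e 0 = 0 ∧ f e (loopGraph.L e) = 0 := hvan
      have hode2 : ∀ e : Fin 2, ∀ x : ℝ, deriv (deriv (f e)) x = -((ω:ℂ)) ^ 2 * f e x := by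
        intro e x
        rw [hode e x, hωC]
      -- edge 0
      have hn0 := hnorm (0 : Fin 2)
      rw [normDer0 f] at hn0
      have hd00 : deriv (f (0 : Fin 2)) 0 = 0 := neg_eq_zero.mp hn0
      have hf0 : ∀ x, f (0 : Fin 2) x = 0 := by
        intro x
        have h := key ω (f (0 : Fin 2)) (hcd2 0) (hode2 0) x
        rw [hd00, (hvan2 (0 : Fin 2)).1] at h
        simp only [zero_mul, mul_zero, add_zero, zero_add] at h
        exact (mul_eq_zero.mp h).resolve_left hωne
      have hf0fun : f (0 : Fin 2) = fun _ => (0 : ℂ) := funext hf0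
      have hdf0 : deriv (f (0 : Fin 2)) = fun _ => (0 : ℂ) := by rw [hf0fun, hdz]
      -- edge 1
      have hn1 := hnorm (1 : Fin 2)
      rw [normDer1 f, hdf0] at hn1
      simp only [zero_add] at hn1
      have hd11 : deriv (f (1 : Fin 2)) 1 = deriv (f (1 : Fin 2)) 0 := sub_eq_zero.mp hn1
      have h10 : f (1 : Fin 2) 0 = 0 := (hvan2 1).1
      have h11 : f (1 : Fin 2) (1 : ℝ) = 0 := by
        have h := (hvan2 1).2
        rwa [show loopGraph.L (1 : Fin 2) = (1 : ℝ) from rfl] at h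
      have hform : ∀ x, (ω:ℂ) * f (1 : Fin 2) x = deriv (f (1 : Fin 2)) 0 * SS ω x := by
        intro x
        rw [key ω (f (1 : Fin 2)) (hcd2 1) (hode2 1) x, h10]
        ring
      have hfun : (fun x => (ω:ℂ) * f (1 : Fin 2) x)
          = fun x => deriv (f (1 : Fin 2)) 0 * SS ω x := funext hform
      have hder1 : (ω:ℂ) * deriv (f (1 : Fin 2)) 1
          = deriv (f (1 : Fin 2)) 0 * ((ω:ℂ) * CC ω 1) := by
        have hL : HasDerivAt (fun x => (ω:ℂ) * f (1 : Fin 2) x)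
            ((ω:ℂ) * deriv (f (1 : Fin 2)) 1) 1 :=
          (((hcd2 1).differentiable (by norm_num) 1).hasDerivAt).const_mul _
        have hR : HasDerivAt (fun x => deriv (f (1 : Fin 2)) 0 * SS ω x)
            (deriv (f (1 : Fin 2)) 0 * ((ω:ℂ) * CC ω 1)) 1 :=
          (hS ω 1).const_mul _
        rw [hfun] at hL
        exact hL.unique hR
      rw [hd11] at hder1
      have h5 : (ω:ℂ) * (deriv (f (1 : Fin 2)) 0 * (CC ω 1 - 1)) = 0 := by
        linear_combination -hder1
      have h6 : deriv (f (1 : Fin 2)) 0 * (CC ω 1 - 1) = 0 :=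
        (mul_eq_zero.mp h5).resolve_left hωne
      have hd0' : deriv (f (1 : Fin 2)) 0 = 0 := by
        rcases mul_eq_zero.mp h6 with h | h
        · exact h
        · exfalso
          have hcos : Real.cos ω = 1 := by
            have : CC ω 1 = 1 := sub_eq_zero.mp h
            rw [CC, mul_one] at this
            exact_mod_cast this
          have := (Real.cos_eq_one_iff_of_lt_of_lt (by linarith [Real.pi_pos]) (by linarith)).mp hcos
          exact hω0.ne' this
      have hf1 : ∀ x, f (1 : Fin 2) x = 0 := by
        intro x
        have h := hform x
        rw [hd0', zero_mul] at h
        exact (mul_eq_zero.mp h).resolve_left hωne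
      have hall : ∀ e : Fin 2, ∀ x, f e x = 0 := by
        rw [Fin.forall_fin_two]
        exact ⟨hf0, hf1⟩
      funext e x
      exact hall e x
    · intro h
      rw [h]
      exact zero_mem lam
end
end
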